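/- arXiv:1802.10142 — 7 statements merged into one kernel-verified Lean document; each statement's English description precedes it below -/
import Mathlib

section
/- Let F be a forest and M a matrix over a field F with rows and columns indexed by V(F), zero diagonal, and M_{u,v} ≠ 0 iff {u,v} ∈ E(F). If two vertices v and w both belong to the null support of M (i.e., each has a nonzero coordinate in some null vector of M), then {v,w} is not an edge of F. -/
open SimpleGraph Matrix
open scoped Classical

/-- `M ∈ 𝓜_{𝔽,0}(G)`: zero diagonal, and off-diagonal entries are nonzero
exactly on the edges of `G`. -/
def MPattern0 {V : Type} {F : Type} [Field F] (G : SimpleGraph V)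
    (M : Matrix V V F) : Prop :=
  (∀ v, M v v = 0) ∧ ∀ u v : V, u ≠ v → (M u v ≠ 0 ↔ G.Adj u v)

/-- The null support of `M`: vertices with a nonzero coordinate in some null vector. -/
def nullSupp {V : Type} [Fintype V] {F : Type} [Field F] (M : Matrix V V F) : Set V :=
  {v | ∃ x : V → F, M.mulVec x = 0 ∧ x v ≠ 0}

section Aux

variable {V : Type}

/-- Vertices on the `r`-side of the edge `{p, r}`. -/
def side (G : SimpleGraph V) (p r : V) : Set V :=
  {u | (G.deleteEdges {s(p, r)}).Reachable r u}

lemma r_mem_side (G : SimpleGraph V) (p r : V) : r ∈ side G p r :=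
  Reachable.refl r

lemma p_not_mem_side {G : SimpleGraph V} (hG : G.IsAcyclic) {p r : V} (h : G.Adj p r) :
    p ∉ side G p r := by
  intro hp
  have hb := (isAcyclic_iff_forall_adj_isBridge.mp hG) h
  rw [isBridge_iff] at hb
  exact hb (hp.symm)

lemma mem_side_of_adj {G : SimpleGraph V} {p r u t : V}
    (hu : u ∈ side G p r) (hut : G.Adj u t) (hne : s(u, t) ≠ s(p, r)) :
    t ∈ side G p r := by
  refine Reachable.trans hu (Adj.reachable ?_)
  rw [SimpleGraph.deleteEdges_adj]
  exact ⟨hut, by simpa using hne⟩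

lemma mem_side_of_adj' {G : SimpleGraph V} (hG : G.IsAcyclic) {p r u t : V}
    (hpr : G.Adj p r) (hu : u ∈ side G p r) (hur : u ≠ r) (hut : G.Adj u t) :
    t ∈ side G p r := by
  refine mem_side_of_adj hu hut ?_
  intro he
  rw [Sym2.eq_iff] at he
  rcases he with ⟨hup, _⟩ | ⟨hur', _⟩
  · exact p_not_mem_side hG hpr (hup ▸ hu)
  · exact hur hur'

/-- walks from `c` avoiding `r` (in reachability sense) survive deleting an edge at `r`. -/
lemma reach_aux {G : SimpleGraph V} (p r : V) :
    ∀ {c u : V}, G.Walk c u → ¬ G.Reachable c r →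
      (G.deleteEdges {s(p, r)}).Reachable c u := by
  intro c u w
  induction w with
  | nil => exact fun _ => Reachable.refl _
  | @cons a b u hab w ih =>
    intro hcr
    have hbr : ¬ G.Reachable b r := fun h => hcr (hab.reachable.trans h)
    have hne : s(a, b) ≠ s(p, r) := by
      intro he
      rw [Sym2.eq_iff] at he
      rcases he with ⟨hap, hbr'⟩ | ⟨har, hbp⟩
      · exact hbr (hbr' ▸ Reachable.refl _)
      · exact hcr (har ▸ Reachable.refl _)
    have hadj : (G.deleteEdges {s(p, r)}).Adj a b := by
      rw [SimpleGraph.deleteEdges_adj]; exact ⟨hab, by simpa using hne⟩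
    exact hadj.reachable.trans (ih hbr)

lemma side_subset {G : SimpleGraph V} (hG : G.IsAcyclic) {p r c : V}
    (hpr : G.Adj p r) (hc : c ∈ side G p r) (hrc : G.Adj r c) :
    side G r c ⊆ side G p r := by
  intro u hu
  -- `c` is not reachable from ... : the edge r-c is a bridge
  have hb := (isAcyclic_iff_forall_adj_isBridge.mp hG) hrc
  rw [isBridge_iff] at hb
  have hcr : ¬ (G.deleteEdges {s(r, c)}).Reachable c r := fun h => hb h.symm
  obtain ⟨w⟩ := hu
  -- w : walk from c to u in G.deleteEdges {s(r,c)}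
  have h2 : ((G.deleteEdges {s(r, c)}).deleteEdges {s(p, r)}).Reachable c u :=
    reach_aux p r w hcr
  have hle : (G.deleteEdges {s(r, c)}).deleteEdges {s(p, r)} ≤ G.deleteEdges {s(p, r)} := by
    intro a b hab
    rw [SimpleGraph.deleteEdges_adj] at hab ⊢
    rw [SimpleGraph.deleteEdges_adj] at hab
    exact ⟨hab.1.1, hab.2⟩
  have hcu : (G.deleteEdges {s(p, r)}).Reachable c u := h2.mono hle
  exact Reachable.trans hc hcu

lemma c_not_mem_side {G : SimpleGraph V} (hG : G.IsAcyclic) {r c : V} (hrc : G.Adj r c) :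
    r ∉ side G r c := by
  intro hr
  have hb := (isAcyclic_iff_forall_adj_isBridge.mp hG) hrc
  rw [isBridge_iff] at hb
  exact hb (hr.symm)

variable [Fintype V] [DecidableEq V] {F : Type} [Field F]

lemma keyL {G : SimpleGraph V} (hG : G.IsAcyclic) {M : Matrix V V F}
    (hM : MPattern0 G M) :
    ∀ (n : ℕ) (p r : V), G.Adj p r → (side G p r).ncard ≤ n →
      ∀ x : V → F, (∀ u ∈ side G p r, u ≠ r → M.mulVec x u = 0) → x r ≠ 0 →
      ∀ c, G.Adj r c → c ≠ p → x c = 0 := by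
  intro n
  induction n with
  | zero =>
    intro p r hpr hcard x _ _ c _ _
    exfalso
    have : (side G p r).ncard = 0 := Nat.le_zero.mp hcard
    have hne : (side G p r).Nonempty := ⟨r, r_mem_side G p r⟩
    rw [Set.ncard_eq_zero (Set.toFinite _)] at this
    exact hne.ne_empty this
  | succ n ih =>
    intro p r hpr hcard x hrows hxr c hrc hcp
    by_contra hxc
    -- c ∈ side G p r
    have hcside : c ∈ side G p r := by
      refine mem_side_of_adj (r_mem_side G p r) hrc ?_
      intro he
      rw [Sym2.eq_iff] at he
      rcases he with ⟨hrp, hcr⟩ | ⟨_, hcp'⟩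
      · exact hpr.ne (hrp.symm) |>.elim
      · exact hcp hcp'
    -- strict inclusion of sides
    have hsub : side G r c ⊆ side G p r := side_subset hG hpr hcside hrc
    have hrnot : r ∉ side G r c := c_not_mem_side hG hrc
    have hlt : (side G r c).ncard < (side G p r).ncard := by
      apply Set.ncard_lt_ncard _ (Set.toFinite _)
      exact ⟨hsub, fun hss => hrnot (hss (r_mem_side G p r))⟩
    have hcard' : (side G r c).ncard ≤ n := by omega
    -- rows hypothesis for the smaller side
    have hrows' : ∀ u ∈ side G r c, u ≠ c → M.mulVec x u = 0 := by
      intro u hu _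
      have hur : u ≠ r := fun h => hrnot (h ▸ hu)
      exact hrows u (hsub hu) hur
    have hall : ∀ d, G.Adj c d → d ≠ r → x d = 0 :=
      ih r c hrc hcard' x hrows' hxc
    -- now the row at c gives a contradiction
    have hcr' : c ≠ r := fun h => (hrc.ne h.symm)
    have hrow := hrows c hcside hcr'
    rw [Matrix.mulVec, dotProduct] at hrow
    have : ∑ t, M c t * x t = M c r * x r := by
      apply Finset.sum_eq_single
      · intro t _ htr
        by_cases htc : t = c
        · rw [htc, hM.1, zero_mul]
        · by_cases hadj : G.Adj c t
          · rw [hall t hadj htr, mul_zero]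
          · have : M c t = 0 := by
              by_contra hne
              exact hadj ((hM.2 c t (Ne.symm htc)).mp hne)
            rw [this, zero_mul]
      · intro h; exact absurd (Finset.mem_univ r) h
    rw [this] at hrow
    have hMcr : M c r ≠ 0 := (hM.2 c r hcr').mpr hrc.symm
    exact hMcr (by
      rcases mul_eq_zero.mp hrow with h | h
      · exact h
      · exact absurd h hxr)

/-- A null vector cannot be nonzero on both endpoints of an edge. -/
lemma nullvec_edge {G : SimpleGraph V} (hG : G.IsAcyclic) {M : Matrix V V F}
    (hM : MPattern0 G M) {z : V → F} (hz : M.mulVec z = 0) {v w : V}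
    (hvw : G.Adj v w) (hzw : z w ≠ 0) : z v = 0 := by
  have hall : ∀ c, G.Adj w c → c ≠ v → z c = 0 := by
    refine keyL hG hM (side G v w).ncard v w hvw le_rfl z ?_ hzw
    intro u _ _
    exact congrFun hz u
  have hrow : M.mulVec z w = 0 := congrFun hz w
  rw [Matrix.mulVec, dotProduct] at hrow
  have : ∑ t, M w t * z t = M w v * z v := by
    apply Finset.sum_eq_single
    · intro t _ htv
      by_cases htw : t = w
      · rw [htw, hM.1, zero_mul]
      · by_cases hadj : G.Adj w t
        · rw [hall t hadj htv, mul_zero]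
        · have : M w t = 0 := by
            by_contra hne
            exact hadj ((hM.2 w t (Ne.symm htw)).mp hne)
          rw [this, zero_mul]
    · intro h; exact absurd (Finset.mem_univ v) h
  rw [this] at hrow
  have hMwv : M w v ≠ 0 := (hM.2 w v (fun h => hvw.ne h.symm)).mpr hvw.symm
  rcases mul_eq_zero.mp hrow with h | h
  · exact absurd h hMwv
  · exact h

end Aux

theorem stmt0 {V : Type} [Fintype V] [DecidableEq V] {F : Type} [Field F]
    (G : SimpleGraph V) (hG : G.IsAcyclic) (M : Matrix V V F)
    (hM : MPattern0 G M) (v w : V)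
    (hv : v ∈ nullSupp M) (hw : w ∈ nullSupp M) :
    ¬ G.Adj v w := by
  intro hvw
  obtain ⟨x, hx, hxv⟩ := hv
  obtain ⟨y, hy, hyw⟩ := hw
  have hxw : x w = 0 := nullvec_edge hG hM hx hvw.symm hxv
  have hyv : y v = 0 := nullvec_edge hG hM hy hvw hyw
  have hz : M.mulVec (x + y) = 0 := by
    rw [Matrix.mulVec_add, hx, hy, add_zero]
  have hzv : (x + y) v ≠ 0 := by simp [Pi.add_apply, hyv, hxv]
  have hzw : (x + y) w ≠ 0 := by simp [Pi.add_apply, hxw, hyw]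
  exact hzw (nullvec_edge hG hM hz hvw.symm hzv)
end

section
/- Let M be an acyclic matrix over a field F (i.e., M ∈ M_F(F') for some forest F'). Then there exist a finite-dimensional field extension E of F and an invertible diagonal matrix D over E such that D^{-1} M D is symmetric. -/
open SimpleGraph Matrix
open scoped Classical

noncomputable section AuxForStmt1

variable {V : Type} {E : Type} [Field E] {G : SimpleGraph V}

/-- Product of `σ` along the darts of a walk. -/
def dartProd (σ : V → V → E) {a b : V} (p : G.Walk a b) : E :=
  (p.darts.map (fun d => σ d.fst d.snd)).prod

lemma dartProd_nil (σ : V → V → E) (a : V) :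
    dartProd σ (SimpleGraph.Walk.nil : G.Walk a a) = 1 := rfl

lemma dartProd_append (σ : V → V → E) {a b c : V} (p : G.Walk a b) (q : G.Walk b c) :
    dartProd σ (p.append q) = dartProd σ p * dartProd σ q := by
  simp [dartProd, SimpleGraph.Walk.darts_append]

lemma dartProd_concat (σ : V → V → E) {a b c : V} (p : G.Walk a b) (h : G.Adj b c) :
    dartProd σ (p.concat h) = dartProd σ p * σ b c := by
  simp [dartProd, SimpleGraph.Walk.darts_concat]

lemma dartProd_ne_zero (σ : V → V → E) (hσ : ∀ u v, G.Adj u v → σ u v ≠ 0)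
    {a b : V} (p : G.Walk a b) : dartProd σ p ≠ 0 := by
  intro h
  rw [dartProd, List.prod_eq_zero_iff] at h
  simp only [List.mem_map] at h
  obtain ⟨d, hd, h0⟩ := h
  exact hσ _ _ d.adj h0

/-- On an acyclic graph, an antisymmetric multiplicative edge labelling has a potential. -/
lemma forest_potential [Fintype V] [DecidableEq V]
    (hG : G.IsAcyclic) (σ : V → V → E)
    (hσ0 : ∀ u v, G.Adj u v → σ u v ≠ 0)
    (hσinv : ∀ u v, G.Adj u v → σ u v * σ v u = 1) :
    ∃ d : V → E, (∀ v, d v ≠ 0) ∧ ∀ u v, G.Adj u v → d v = d u * σ u v := by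
  -- root of each component
  let root : V → V := fun v => (G.connectedComponentMk v).out
  have hreach : ∀ v, G.Reachable (root v) v := by
    intro v
    rw [← SimpleGraph.ConnectedComponent.eq]
    exact (G.connectedComponentMk v).out_eq
  let P : ∀ v, G.Path (root v) v := fun v => (hreach v).some.toPath
  refine ⟨fun v => dartProd σ (P v : G.Walk (root v) v),
    fun v => dartProd_ne_zero σ hσ0 _, ?_⟩
  intro u v huv
  show dartProd σ (P v : G.Walk (root v) v) = dartProd σ (P u : G.Walk (root u) u) * σ u v
  have hroot : root u = root v := by
    have : G.connectedComponentMk u = G.connectedComponentMk v :=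
      SimpleGraph.ConnectedComponent.sound huv.reachable
    simp only [root, this]
  -- move P u to a path ending at u but starting at root v
  set pu : G.Walk (root v) u := (P u : G.Walk (root u) u).copy hroot rfl with hpudef
  have hpu : dartProd σ pu = dartProd σ (P u : G.Walk (root u) u) := by
    rw [hpudef, dartProd, dartProd, SimpleGraph.Walk.darts_copy]
  rw [← hpu]
  by_cases hv : v ∈ pu.support
  · -- then P v is the prefix of pu up to v, and the rest is the single edge v-u
    have hpath : pu.IsPath := by
      rw [hpudef, SimpleGraph.Walk.isPath_copy]; exact (P u).2
    have htake : (pu.takeUntil v hv).IsPath := hpath.takeUntil hv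
    have hdrop : (pu.dropUntil v hv).IsPath := hpath.dropUntil hv
    have h1 : (⟨_, htake⟩ : G.Path (root v) v) = P v := hG.path_unique _ _
    have hsingle : (SimpleGraph.Walk.cons huv.symm SimpleGraph.Walk.nil : G.Walk v u).IsPath := by
      simp [huv.ne']
    have h2 : (⟨_, hdrop⟩ : G.Path v u) = ⟨_, hsingle⟩ := hG.path_unique _ _
    have hspec := pu.take_spec hv
    have := congrArg (dartProd σ) hspec
    rw [dartProd_append] at this
    have e1 : dartProd σ (pu.takeUntil v hv)
        = dartProd σ (P v : G.Walk (root v) v) := by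
      rw [← h1]
    have e2 : dartProd σ (pu.dropUntil v hv) = σ v u := by
      have := congrArg (fun p : G.Path v u => dartProd σ (p : G.Walk v u)) h2
      simpa [dartProd] using this
    rw [e1, e2] at this
    rw [← this, mul_assoc, mul_comm (σ v u), hσinv u v huv, mul_one]
  · -- pu extended by the edge u-v is a path from root v to v
    have hpupath : pu.IsPath := by
      rw [hpudef, SimpleGraph.Walk.isPath_copy]; exact (P u).2
    have hpath : (pu.concat huv).IsPath := by
      rw [← SimpleGraph.Walk.isPath_reverse_iff, SimpleGraph.Walk.reverse_concat]
      exact (hpupath.reverse).cons (by simpa using hv)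
    have h1 : (⟨_, hpath⟩ : G.Path (root v) v) = P v := hG.path_unique _ _
    have := congrArg (fun p : G.Path (root v) v => dartProd σ (p : G.Walk (root v) v)) h1
    simp only at this
    rw [← this, dartProd_concat]

end AuxForStmt1

theorem stmt1 {V : Type} [Fintype V] [DecidableEq V] {F : Type} [Field F]
    (G : SimpleGraph V) (hG : G.IsAcyclic) (M : Matrix V V F)
    -- `M` is acyclic: its off-diagonal support pattern is the edge set of the
    -- forest `G` (diagonal entries are arbitrary).
    (hM : ∀ u v : V, u ≠ v → (M u v ≠ 0 ↔ G.Adj u v)) :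
    ∃ (E : Type) (_ : Field E) (_ : Algebra F E) (_ : FiniteDimensional F E)
      (D : Matrix V V E), D.IsDiag ∧ IsUnit D ∧
        (D⁻¹ * M.map (algebraMap F E) * D).IsSymm := by
  classical
  -- ratio in F
  set r : V → V → F := fun u v => M v u / M u v with hr
  -- square roots in the algebraic closure
  set A := AlgebraicClosure F
  have sqex : ∀ u v : V, ∃ z : A, z ^ 2 = algebraMap F A (r u v) := fun u v =>
    IsAlgClosed.exists_pow_nat_eq _ (by norm_num)
  choose sq hsq using sqex
  set S : Set A := Set.range (fun p : V × V => sq p.1 p.2) with hS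
  haveI : Finite S := Set.finite_coe_iff.mpr (Set.finite_range _)
  set E : IntermediateField F A := IntermediateField.adjoin F S with hE
  haveI : FiniteDimensional F E := by
    apply IntermediateField.finiteDimensional_adjoin
    intro x _
    exact (IsAlgClosure.isAlgebraic (R := F) (K := A)).isAlgebraic x |>.isIntegral
  -- the square roots as elements of E
  have memE : ∀ u v : V, sq u v ∈ E :=
    fun u v => IntermediateField.subset_adjoin F S ⟨(u, v), rfl⟩
  set α : V → V → E := fun u v => ⟨sq u v, memE u v⟩ with hα
  have hα2 : ∀ u v, α u v ^ 2 = algebraMap F E (r u v) := by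
    intro u v
    apply Subtype.ext
    push_cast
    exact hsq u v
  -- antisymmetric square root system
  let e := Fintype.equivFin V
  set σ : V → V → E := fun u v => if e u ≤ e v then α u v else (α v u)⁻¹ with hσ
  have hMF : ∀ u v, G.Adj u v → M u v ≠ 0 := fun u v h => (hM u v h.ne).2 h
  have hα0 : ∀ u v, G.Adj u v → α u v ≠ 0 := by
    intro u v h hz
    have := hα2 u v
    rw [hz] at this
    have : algebraMap F E (r u v) = 0 := by rw [← this]; ring
    have hr0 : r u v = 0 := by
      exact (map_eq_zero_iff _ (algebraMap F E).injective).mp this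
    exact (div_ne_zero (hMF v u h.symm) (hMF u v h)) hr0
  have hrinv : ∀ u v, G.Adj u v → r u v * r v u = 1 := by
    intro u v h
    rw [hr]
    dsimp only
    rw [div_mul_div_comm, mul_comm (M u v)]
    exact div_self (mul_ne_zero (hMF v u h.symm) (hMF u v h))
  have hσ0 : ∀ u v, G.Adj u v → σ u v ≠ 0 := by
    intro u v h
    rw [hσ]
    dsimp only
    split
    · exact hα0 u v h
    · exact inv_ne_zero (hα0 v u h.symm)
  have hσinv : ∀ u v, G.Adj u v → σ u v * σ v u = 1 := by
    intro u v h
    rw [hσ]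
    dsimp only
    rcases lt_trichotomy (e u) (e v) with hlt | heq | hlt
    · rw [if_pos hlt.le, if_neg (not_le.mpr hlt)]
      exact mul_inv_cancel₀ (hα0 u v h)
    · exact absurd (e.injective (Fin.ext (by omega))) h.ne
    · rw [if_neg (not_le.mpr hlt), if_pos hlt.le]
      exact inv_mul_cancel₀ (hα0 v u h.symm)
  have hσ2 : ∀ u v, G.Adj u v → σ u v ^ 2 = algebraMap F E (r u v) := by
    intro u v h
    rw [hσ]
    dsimp only
    split
    · exact hα2 u v
    · rw [inv_pow, hα2 v u, ← map_inv₀]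
      congr 1
      rw [eq_inv_of_mul_eq_one_left (hrinv u v h)]
  obtain ⟨d, hd0, hd⟩ := forest_potential hG σ hσ0 hσinv
  refine ⟨E, inferInstance, inferInstance, inferInstance, Matrix.diagonal d,
    Matrix.isDiag_diagonal d, ?_, ?_⟩
  · rw [Matrix.isUnit_iff_isUnit_det, Matrix.det_diagonal]
    exact (Finset.prod_ne_zero_iff.mpr (fun v _ => hd0 v)).isUnit
  · have hDinv : (Matrix.diagonal d)⁻¹ = Matrix.diagonal (fun i => (d i)⁻¹) := by
      apply Matrix.inv_eq_left_inv
      rw [Matrix.diagonal_mul_diagonal]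
      ext i j
      rcases eq_or_ne i j with rfl | hij
      · simp [inv_mul_cancel₀ (hd0 i)]
      · simp [Matrix.diagonal_apply_ne _ hij, Matrix.one_apply_ne hij]
    rw [hDinv, Matrix.IsSymm]
    ext u v
    simp only [Matrix.transpose_apply, Matrix.mul_diagonal, Matrix.diagonal_mul,
      Matrix.map_apply]
    -- goal: (d v)⁻¹ * algebraMap (M v u) * d u = (d u)⁻¹ * algebraMap (M u v) * d v
    by_cases huv : u = v
    · subst huv; ring
    by_cases hadj : G.Adj u v
    · have h1 := hd u v hadj
      have h2 := hσ2 u v hadj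
      have hru : (algebraMap F E) (M u v) ≠ 0 :=
        (map_ne_zero_iff _ (algebraMap F E).injective).mpr (hMF u v hadj)
      have hrv : (algebraMap F E) (M v u) ≠ 0 :=
        (map_ne_zero_iff _ (algebraMap F E).injective).mpr (hMF v u hadj.symm)
      have hdu := hd0 u
      have hdv := hd0 v
      have hs2 : σ u v ^ 2 = algebraMap F E (M v u) / algebraMap F E (M u v) := by
        rw [hσ2 u v hadj, hr]
        dsimp only
        rw [map_div₀]
      have hkey : algebraMap F ↥E (M u v) * (d v) ^ 2
          = algebraMap F ↥E (M v u) * (d u) ^ 2 := by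
        rw [h1, mul_pow, hs2]
        field_simp
      field_simp
      congr 1
      rw [div_eq_div_iff hdv hdu]
      linear_combination -hkey
    · have h1 : M u v = 0 := by
        by_contra h
        exact hadj ((hM u v huv).1 h)
      have h2 : M v u = 0 := by
        by_contra h
        exact hadj (((hM v u (Ne.symm huv)).1 h).symm)
      simp [h1, h2]
end

section
/- Let F be a forest and M, N ∈ M_{F,0}(F). Then a vertex v belongs to Supp(M) if and only if v belongs to Supp(N). In particular, the null support of any matrix in M_{F,0}(F) equals the null support of the adjacency matrix A(F). -/
open SimpleGraph Matrix
open scoped Classical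

/-- A finite forest with an edge has a leaf. -/
lemma forest_exists_leaf {V : Type} [Fintype V] {G : SimpleGraph V}
    (hG : G.IsAcyclic) {x y : V} (hxy : G.Adj x y) :
    ∃ v w : V, G.Adj v w ∧ ∀ u, G.Adj v u → u = w := by
  classical
  set S : Set ℕ := {n | ∃ (a b : V) (p : G.Walk a b), p.IsPath ∧ p.length = n} with hS
  have h1 : (1 : ℕ) ∈ S := ⟨x, y, (SimpleGraph.Path.singleton hxy : G.Path x y).1,
    (SimpleGraph.Path.singleton hxy).2, by simp [SimpleGraph.Path.singleton]⟩
  have hbdd : BddAbove S := by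
    refine ⟨Fintype.card V, fun n hn => ?_⟩
    obtain ⟨a, b, p, hp, hl⟩ := hn
    exact le_of_lt (hl ▸ hp.length_lt)
  obtain ⟨a, b, p, hp, hl⟩ := Nat.sSup_mem ⟨1, h1⟩ hbdd
  have hmax : ∀ m ∈ S, m ≤ p.length := fun m hm => hl ▸ le_csSup hbdd hm
  have hlen : 1 ≤ p.length := hl ▸ le_csSup hbdd h1
  cases p with
  | nil => simp at hlen
  | @cons _ c _ h q =>
    refine ⟨a, c, h, fun u hu => ?_⟩
    by_cases hmem : u ∈ (SimpleGraph.Walk.cons h q).support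
    · have heq : ((SimpleGraph.Path.singleton hu : G.Path a u) : G.Walk a u)
          = (SimpleGraph.Walk.cons h q).takeUntil u hmem := by
        have := hG.path_unique (SimpleGraph.Path.singleton hu)
          ⟨(SimpleGraph.Walk.cons h q).takeUntil u hmem, hp.takeUntil hmem⟩
        exact congrArg Subtype.val this
      have hspec := (SimpleGraph.Walk.cons h q).take_spec hmem
      rw [← heq] at hspec
      have := congrArg (fun w : G.Walk a b => w.getVert 1) hspec
      simpa [SimpleGraph.Path.singleton] using this
    · exfalso
      have hpath : (SimpleGraph.Walk.cons hu.symm (SimpleGraph.Walk.cons h q)).IsPath :=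
        hp.cons hmem
      have : (SimpleGraph.Walk.cons hu.symm (SimpleGraph.Walk.cons h q)).length ∈ S :=
        ⟨u, b, _, hpath, rfl⟩
      have := hmax _ this
      simp at this

/-- Diagonal scaling lemma for forests. -/
lemma forest_exists_scaling {V : Type} [Fintype V] [DecidableEq V] {F : Type} [Field F] :
    ∀ (n : ℕ) (G : SimpleGraph V), G.edgeFinset.card ≤ n → G.IsAcyclic →
    ∀ p : V → V → F, (∀ u v, G.Adj u v → p u v ≠ 0) →
    ∃ a b : V → F, (∀ v, a v ≠ 0) ∧ (∀ v, b v ≠ 0) ∧ ∀ u v, G.Adj u v → a u * b v = p u v := by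
  intro n
  induction n with
  | zero =>
    intro G hcard hG p hp
    refine ⟨fun _ => 1, fun _ => 1, fun _ => one_ne_zero, fun _ => one_ne_zero, fun u v huv => ?_⟩
    exfalso
    have : s(u, v) ∈ G.edgeFinset := by
      rw [SimpleGraph.mem_edgeFinset]; exact huv
    have := Finset.card_pos.mpr ⟨_, this⟩
    omega
  | succ n ih =>
    intro G hcard hG p hp
    by_cases hE : ∃ e, e ∈ G.edgeFinset
    · obtain ⟨e, he⟩ := hE
      obtain ⟨x, y, hxy⟩ : ∃ x y, G.Adj x y := by
        induction e with
        | h x y => exact ⟨x, y, (SimpleGraph.mem_edgeFinset.mp he : G.Adj x y)⟩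
      obtain ⟨v, w, hvw, huniq⟩ := forest_exists_leaf hG hxy
      have hvne : v ≠ w := hvw.ne
      set G' := G.deleteEdges {s(v, w)} with hG'def
      have hle : G' ≤ G := G.deleteEdges_le _
      have hG'ac : G'.IsAcyclic := fun z c hc => hG (c.mapLe hle) (hc.mapLe hle)
      have hedge : G'.edgeFinset = G.edgeFinset \ {s(v, w)} := by
        ext e
        simp [hG'def, SimpleGraph.edgeSet_deleteEdges]
      have hmem : s(v, w) ∈ G.edgeFinset := SimpleGraph.mem_edgeFinset.mpr hvw
      have hcard' : G'.edgeFinset.card ≤ n := by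
        rw [hedge, Finset.sdiff_singleton_eq_erase, Finset.card_erase_of_mem hmem]
        omega
      obtain ⟨a, b, ha, hb, hab⟩ := ih G' (by convert hcard') hG'ac p
        (fun u u' h => hp u u' (hle h))
      refine ⟨Function.update a v (p v w * (b w)⁻¹), Function.update b v (p w v * (a w)⁻¹),
        ?_, ?_, ?_⟩
      · intro z
        by_cases hz : z = v
        · rw [hz, Function.update_self]
          exact mul_ne_zero (hp v w hvw) (inv_ne_zero (hb w))
        · rw [Function.update_of_ne hz]; exact ha z
      · intro z
        by_cases hz : z = v
        · rw [hz, Function.update_self]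
          exact mul_ne_zero (hp w v hvw.symm) (inv_ne_zero (ha w))
        · rw [Function.update_of_ne hz]; exact hb z
      · intro u u' huu'
        by_cases hu : u = v
        · have hw' : u' = w := huniq u' (hu ▸ huu')
          rw [hu, hw', Function.update_self, Function.update_of_ne (Ne.symm hvne),
            mul_assoc, inv_mul_cancel₀ (hb w), mul_one]
        · by_cases hu' : u' = v
          · have hw' : u = w := huniq u (hu' ▸ huu').symm
            rw [hw', hu', Function.update_of_ne (Ne.symm hvne), Function.update_self,
              mul_comm (p w v), ← mul_assoc, mul_inv_cancel₀ (ha w), one_mul]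
          · rw [Function.update_of_ne hu, Function.update_of_ne hu']
            apply hab
            rw [hG'def, SimpleGraph.deleteEdges_adj]
            refine ⟨huu', fun hmem2 => ?_⟩
            rw [Set.mem_singleton_iff, Sym2.eq_iff] at hmem2
            rcases hmem2 with ⟨h1, _⟩ | ⟨_, h2⟩
            · exact hu h1
            · exact hu' h2
    · refine ⟨fun _ => 1, fun _ => 1, fun _ => one_ne_zero, fun _ => one_ne_zero,
        fun u v huv => absurd ⟨s(u, v), SimpleGraph.mem_edgeFinset.mpr huv⟩ hE⟩

lemma nullSupp_subset {V : Type} [Fintype V] [DecidableEq V] {F : Type} [Field F]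
    {G : SimpleGraph V} (hG : G.IsAcyclic) {M N : Matrix V V F}
    (hM : MPattern0 G M) (hN : MPattern0 G N) : nullSupp M ⊆ nullSupp N := by
  obtain ⟨a, b, ha, hb, hab⟩ := forest_exists_scaling G.edgeFinset.card G le_rfl hG
    (fun u v => M u v * (N u v)⁻¹)
    (fun u v huv => mul_ne_zero ((hM.2 u v huv.ne).mpr huv)
      (inv_ne_zero ((hN.2 u v huv.ne).mpr huv)))
  have key : ∀ u v, M u v = a u * (N u v * b v) := by
    intro u v
    by_cases huv : u = v
    · subst huv; rw [hM.1, hN.1]; ring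
    · by_cases hadj : G.Adj u v
      · have hN0 : N u v ≠ 0 := (hN.2 u v huv).mpr hadj
        have h2 := hab u v hadj
        rw [mul_comm (N u v) (b v), ← mul_assoc, h2, mul_assoc, inv_mul_cancel₀ hN0, mul_one]
      · have hM0 : M u v = 0 := by
          by_contra h; exact hadj ((hM.2 u v huv).mp h)
        have hN0 : N u v = 0 := by
          by_contra h; exact hadj ((hN.2 u v huv).mp h)
        rw [hM0, hN0]; ring
  rintro v ⟨x, hx, hxv⟩
  refine ⟨fun w => b w * x w, ?_, mul_ne_zero (hb v) hxv⟩
  funext u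
  have h0 : M.mulVec x u = 0 := congrFun hx u
  have : M.mulVec x u = a u * N.mulVec (fun w => b w * x w) u := by
    simp only [Matrix.mulVec, dotProduct, Finset.mul_sum]
    refine Finset.sum_congr rfl fun w _ => ?_
    rw [key u w]; ring
  rw [this] at h0
  have := mul_eq_zero.mp h0
  rcases this with h | h
  · exact absurd h (ha u)
  · simpa using h

theorem stmt8 {V : Type} [Fintype V] [DecidableEq V] {F : Type} [Field F]
    (G : SimpleGraph V) (hG : G.IsAcyclic) (M N : Matrix V V F)
    (hM : MPattern0 G M) (hN : MPattern0 G N) :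
    (∀ v : V, v ∈ nullSupp M ↔ v ∈ nullSupp N) ∧
      nullSupp M = nullSupp (G.adjMatrix F) := by
  have hA : MPattern0 G (G.adjMatrix F) := by
    constructor
    · intro v; simp
    · intro u v huv
      rw [SimpleGraph.adjMatrix_apply]
      by_cases h : G.Adj u v
      · simp [h]
      · simp [h]
  refine ⟨fun v => ⟨fun h => nullSupp_subset hG hM hN h, fun h => nullSupp_subset hG hN hM h⟩, ?_⟩
  exact Set.Subset.antisymm (nullSupp_subset hG hM hA) (nullSupp_subset hG hA hM)
end

section
/- Let F be a forest, M ∈ M_{F,0}(F), and let S = Supp(M). Let 𝓕_S(F) be the subgraph of F induced by S ∪ N(S). Then a vector x is in the null space of M if and only if the restriction of x to 𝓕_S(F) lies in the null space of M[𝓕_S(F)] and x vanishes on all vertices outside 𝓕_S(F). -/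
open SimpleGraph Matrix
open scoped Classical

section Helpers

variable {V : Type} [Fintype V] [DecidableEq V] {F : Type} [Field F]

lemma mulVec_apply (M : Matrix V V F) (x : V → F) (w : V) :
    M.mulVec x w = ∑ u, M w u * x u := rfl

lemma sum_subtype_set (s : Set V) (f : V → F) :
    ∑ u : ↥s, f ↑u = ∑ u ∈ s.toFinset, f u :=
  (Finset.sum_subtype s.toFinset (by simp) f).symm

lemma sum_split1 (ℓ : V) (f : V → F) :
    (∑ u, f u) = f ℓ + ∑ u : (({ℓ}ᶜ : Set V) : Type), f ↑u := by
  rw [← Finset.sum_subtype (({ℓ}ᶜ : Set V).toFinset) (by simp) f]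
  have h : ({ℓ}ᶜ : Set V).toFinset = ({ℓ} : Finset V)ᶜ := by
    ext; simp
  rw [h, ← Finset.sum_compl_add_sum ({ℓ} : Finset V) f, Finset.sum_singleton]
  ring

lemma sum_split2 {ℓ p : V} (hlp : ℓ ≠ p) (f : V → F) :
    (∑ u, f u) = f ℓ + f p + ∑ u : (({ℓ, p}ᶜ : Set V) : Type), f ↑u := by
  rw [← Finset.sum_subtype (({ℓ, p}ᶜ : Set V).toFinset) (by simp) f]
  have h : ({ℓ, p}ᶜ : Set V).toFinset = ({ℓ, p} : Finset V)ᶜ := by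
    ext; simp
  rw [h, ← Finset.sum_compl_add_sum ({ℓ, p} : Finset V) f, Finset.sum_pair hlp]
  ring

lemma isAcyclic_induce {G : SimpleGraph V} (hG : G.IsAcyclic) (s : Set V) :
    (G.induce s).IsAcyclic := by
  intro v c hc
  exact hG (c.map (Embedding.induce s).toHom)
    (hc.map (fun a b hab => Subtype.val_injective hab))

lemma mpattern_induce {G : SimpleGraph V} {M : Matrix V V F} (hM : MPattern0 G M)
    (s : Set V) : MPattern0 (G.induce s) (M.submatrix ((↑) : ↥s → V) ((↑) : ↥s → V)) := by
  constructor
  · intro v; exact hM.1 ↑v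
  · intro u v huv
    exact (hM.2 ↑u ↑v (fun h => huv (Subtype.val_injective h)))

end Helpers

section Leaf

variable {V : Type} {G : SimpleGraph V}

lemma concat_path {u v w : V} {p : G.Walk u v} (hp : p.IsPath) (h : G.Adj v w)
    (hw : w ∉ p.support) : (p.concat h).IsPath := by
  rw [← Walk.isPath_reverse_iff, Walk.reverse_concat, Walk.cons_isPath_iff]
  exact ⟨hp.reverse, by simp [Walk.support_reverse, hw]⟩

lemma exists_near_leaf [Fintype V] (hG : G.IsAcyclic) [Nonempty V] :
    ∃ m q : V, ∀ y, G.Adj m y → y = q := by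
  classical
  set P : ℕ → Prop := fun n => ∃ (u w : V) (q : G.Walk u w), q.IsPath ∧ q.length = n with hP
  obtain ⟨v⟩ := ‹Nonempty V›
  have h0 : P 0 := ⟨v, v, Walk.nil, by simp⟩
  have hbd : ∀ n, P n → n ≤ Fintype.card V := by
    rintro n ⟨u, w, q, hq, rfl⟩
    have h1 := (hq.support_nodup).length_le_card
    have h2 := q.length_support
    omega
  set N := Nat.findGreatest P (Fintype.card V) with hNdef
  have hN : P N := Nat.findGreatest_spec (Nat.zero_le _) h0
  have hmax : ∀ (a b : V) (q : G.Walk a b), q.IsPath → q.length ≤ N := by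
    intro a b q hq
    exact Nat.le_findGreatest (hbd _ ⟨a, b, q, hq, rfl⟩) ⟨a, b, q, hq, rfl⟩
  obtain ⟨u, w, p, hp, hplen⟩ := hN
  refine ⟨w, p.reverse.getVert 1, ?_⟩
  intro x hx
  have hxs : x ∈ p.support := by
    by_contra hxs
    have hpath : (p.concat hx).IsPath := concat_path hp hx hxs
    have := hmax _ _ _ hpath
    rw [Walk.length_concat, hplen] at this
    omega
  have hq : (p.takeUntil x hxs).IsPath := hp.takeUntil hxs
  have hwq : w ∉ (p.takeUntil x hxs).support := by
    intro hw
    have hnd := hp.support_nodup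
    conv at hnd => rw [← p.take_spec hxs]
    rw [Walk.support_append, List.nodup_append] at hnd
    have hwd : w ∈ (p.dropUntil x hxs).support := Walk.end_mem_support _
    have hwtail : w ∉ (p.dropUntil x hxs).support.tail := fun hmem => hnd.2.2 w hw w hmem rfl
    rw [Walk.support_eq_cons] at hwd
    rcases List.mem_cons.mp hwd with h1 | h1
    · exact (G.ne_of_adj hx) h1
    · exact hwtail h1
  have hQpath : ((p.takeUntil x hxs).concat hx.symm).IsPath := concat_path hq hx.symm hwq
  have hQeq : (p.takeUntil x hxs).concat hx.symm = p := by
    have := hG.path_unique ⟨(p.takeUntil x hxs).concat hx.symm, hQpath⟩ ⟨p, hp⟩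
    exact congrArg Subtype.val this
  have : p.reverse.getVert 1 = x := by
    rw [← hQeq, Walk.reverse_concat, Walk.getVert_cons_succ, Walk.getVert_zero]
  exact this.symm

end Leaf

section NullSupp

variable {V : Type} [Fintype V] [DecidableEq V] {F : Type} [Field F]

lemma not_adj_entry_zero {G : SimpleGraph V} {M : Matrix V V F} (hM : MPattern0 G M)
    {u v : V} (h : ¬ G.Adj u v) : M u v = 0 := by
  by_cases huv : u = v
  · subst huv; exact hM.1 u
  · by_contra h'
    exact h ((hM.2 u v huv).1 h')

lemma null_vanish {M : Matrix V V F} {x : V → F} (hx : M.mulVec x = 0) {v : V}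
    (hv : v ∉ nullSupp M) : x v = 0 := by
  by_contra h
  exact hv ⟨x, hx, h⟩

lemma row_single {G : SimpleGraph V} {M : Matrix V V F} (hM : MPattern0 G M)
    {ℓ q : V} (hnb : ∀ y, G.Adj ℓ y → y = q) (x : V → F) :
    ∑ u, M ℓ u * x u = M ℓ q * x q := by
  apply Finset.sum_eq_single
  · intro b _ hb
    have : M ℓ b = 0 := by
      by_cases hbℓ : ℓ = b
      · exact hbℓ ▸ hM.1 ℓ
      · exact not_adj_entry_zero hM (fun hadj => hb (hnb b hadj))
    rw [this, zero_mul]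
  · intro h
    exact absurd (Finset.mem_univ q) h

lemma row_isolated {G : SimpleGraph V} {M : Matrix V V F} (hM : MPattern0 G M)
    {ℓ : V} (hnb : ∀ y, ¬ G.Adj ℓ y) (x : V → F) :
    ∑ u, M ℓ u * x u = 0 := by
  apply Finset.sum_eq_zero
  intro b _
  have : M ℓ b = 0 := by
    by_cases hbℓ : ℓ = b
    · exact hbℓ ▸ hM.1 ℓ
    · exact not_adj_entry_zero hM (hnb b)
  rw [this, zero_mul]

lemma lemC (F : Type) [Field F] : ∀ (n : ℕ) {V : Type} [Fintype V] [DecidableEq V]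
    (G : SimpleGraph V) (M : Matrix V V F),
    Fintype.card V ≤ n → G.IsAcyclic → MPattern0 G M →
    ∀ (x : V → F), M.mulVec x = 0 → ∀ v₀ : V, x v₀ ≠ 0 →
    ∃ m q : V, (∀ y, G.Adj m y → y = q) ∧ x m ≠ 0 := by
  intro n
  induction n with
  | zero =>
    intro V _ _ G M hcard _ _ x _ v₀ _
    exact absurd (Fintype.card_pos_iff.mpr ⟨v₀⟩) (by omega)
  | succ n ih =>
    intro V _ _ G M hcard hG hM x hx v₀ hv₀
    haveI : Nonempty V := ⟨v₀⟩
    obtain ⟨ℓ, q, hℓq⟩ := exists_near_leaf hG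
    by_cases hxl : x ℓ = 0
    swap
    · exact ⟨ℓ, q, hℓq, hxl⟩
    have hv₀ℓ : v₀ ≠ ℓ := fun h => hv₀ (h ▸ hxl)
    have hcard' : Fintype.card (({ℓ}ᶜ : Set V) : Type) ≤ n := by
      have h1 : Fintype.card (({ℓ}ᶜ : Set V) : Type) < Fintype.card V := by
        apply Fintype.card_lt_of_injective_not_surjective
          ((↑) : (({ℓ}ᶜ : Set V) : Type) → V) Subtype.val_injective
        intro hsurj
        obtain ⟨y, hy⟩ := hsurj ℓ
        have hy2 := y.2
        simp [hy] at hy2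
      omega
    have hx' : (M.submatrix ((↑) : (({ℓ}ᶜ : Set V) : Type) → V) ((↑) : (({ℓ}ᶜ : Set V) : Type) → V)).mulVec
        (fun u => x ↑u) = 0 := by
      funext w
      have h0 : M.mulVec x ↑w = 0 := congrFun hx ↑w
      rw [_root_.mulVec_apply, sum_split1 ℓ (fun u => M ↑w u * x u)] at h0
      rw [hxl, mul_zero, zero_add] at h0
      exact h0
    obtain ⟨m, mq, hm, hxm⟩ := ih (G.induce ({ℓ}ᶜ : Set V)) _ hcard'
      (isAcyclic_induce hG _) (mpattern_induce hM _) _ hx'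
      ⟨v₀, by simp [hv₀ℓ]⟩ hv₀
    have hmℓ : ¬ G.Adj (↑m) ℓ := by
      intro hadj
      have hqm : (↑m : V) = q := hℓq _ hadj.symm
      have h0 : M.mulVec x ℓ = 0 := congrFun hx ℓ
      rw [_root_.mulVec_apply, row_single hM hℓq] at h0
      rw [← hqm] at h0
      have hMℓm : M ℓ ↑m ≠ 0 :=
        (hM.2 ℓ ↑m (G.ne_of_adj hadj.symm)).2 hadj.symm
      exact (mul_ne_zero hMℓm hxm) h0
    refine ⟨↑m, ↑mq, ?_, hxm⟩
    intro y hy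
    have hyℓ : y ≠ ℓ := fun h => hmℓ (h ▸ hy)
    have : (G.induce ({ℓ}ᶜ : Set V)).Adj m ⟨y, by simp [hyℓ]⟩ := hy
    exact congrArg Subtype.val (hm _ this)

end NullSupp

section KL

variable {V : Type} [Fintype V] [DecidableEq V] {F : Type} [Field F]

def Wset (G : SimpleGraph V) (M : Matrix V V F) : Set V :=
  nullSupp M ∪ {u : V | ∃ s ∈ nullSupp M, G.Adj u s}

lemma KLaux (F : Type) [Field F] : ∀ (n : ℕ) {V : Type} [Fintype V] [DecidableEq V]
    (G : SimpleGraph V) (M : Matrix V V F),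
    Fintype.card V ≤ n → G.IsAcyclic → MPattern0 G M →
    ∀ (z : V → F), (∀ v, v ∉ Wset G M → z v = 0) →
    (∀ w ∈ Wset G M, M.mulVec z w = 0) → M.mulVec z = 0 := by
  intro n
  induction n with
  | zero =>
    intro V _ _ G M hcard _ _ z _ _
    haveI : IsEmpty V := Fintype.card_eq_zero_iff.mp (le_antisymm hcard (Nat.zero_le _))
    funext v
    exact isEmptyElim v
  | succ n ih =>
    intro V _ _ G M hcard hG hM z hz hrow
    by_cases hS : nullSupp M = ∅
    · have hz0 : z = 0 := by
        funext v
        refine hz v ?_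
        simp [Wset, hS]
      rw [hz0, Matrix.mulVec_zero]
    · obtain ⟨s₀, hs₀⟩ := Set.nonempty_iff_ne_empty.mpr hS
      obtain ⟨x₀, hx₀null, hx₀s⟩ := hs₀
      obtain ⟨ℓ, pℓ, hℓnb, hxℓ⟩ := lemC F (n+1) G M hcard hG hM x₀ hx₀null s₀ hx₀s
      have hℓS : ℓ ∈ nullSupp M := ⟨x₀, hx₀null, hxℓ⟩
      by_cases hadj : G.Adj ℓ pℓ
      · -- leaf case: ℓ ∈ S with unique neighbor pℓ
        set p := pℓ with hp
        have hlp : ℓ ≠ p := G.ne_of_adj hadj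
        have hMℓp : M ℓ p ≠ 0 := (hM.2 ℓ p hlp).2 hadj
        have hMpℓ : M p ℓ ≠ 0 := (hM.2 p ℓ (Ne.symm hlp)).2 hadj.symm
        have hcolℓ : ∀ u, u ≠ p → M u ℓ = 0 := by
          intro u hup
          by_cases huℓ : u = ℓ
          · exact huℓ ▸ hM.1 ℓ
          · refine not_adj_entry_zero hM (fun h => hup (hℓnb u h.symm))
        have hznull_p : ∀ y : V → F, M.mulVec y = 0 → y p = 0 := by
          intro y hy
          have h0 := congrFun hy ℓ
          rw [_root_.mulVec_apply, row_single hM hℓnb y] at h0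
          simpa using (mul_eq_zero.mp h0).resolve_left hMℓp
        have hpS : p ∉ nullSupp M := by
          rintro ⟨y, hy, hyp⟩
          exact hyp (hznull_p y hy)
        have hmem : ∀ v : V, v ∈ ({ℓ, p}ᶜ : Set V) ↔ (v ≠ ℓ ∧ v ≠ p) := by
          intro v; simp [not_or]
        -- restriction of null vectors
        have f5 : ∀ y : V → F, M.mulVec y = 0 →
            (M.submatrix ((↑) : (({ℓ, p}ᶜ : Set V) : Type) → V)
              ((↑) : (({ℓ, p}ᶜ : Set V) : Type) → V)).mulVec (fun u => y ↑u) = 0 := by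
          intro y hy
          funext w
          have h0 := congrFun hy ↑w
          rw [_root_.mulVec_apply, sum_split2 hlp (fun u => M ↑w u * y u)] at h0
          rw [hcolℓ ↑w ((hmem ↑w).mp w.2).2, zero_mul, hznull_p y hy, mul_zero] at h0
          rw [_root_.mulVec_apply]; simpa using h0
        -- extension of null vectors
        have f6 : ∀ y' : (({ℓ, p}ᶜ : Set V) : Type) → F,
            (M.submatrix ((↑) : (({ℓ, p}ᶜ : Set V) : Type) → V)
              ((↑) : (({ℓ, p}ᶜ : Set V) : Type) → V)).mulVec y' = 0 →
            M.mulVec (fun v => if h : v ∈ ({ℓ, p}ᶜ : Set V) then y' ⟨v, h⟩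
              else if v = ℓ then -(M p ℓ)⁻¹ * (∑ u : (({ℓ, p}ᶜ : Set V) : Type), M p ↑u * y' u)
              else 0) = 0 := by
          intro y' hy'
          set c := -(M p ℓ)⁻¹ * (∑ u : (({ℓ, p}ᶜ : Set V) : Type), M p ↑u * y' u) with hc
          set ext : V → F := fun v => if h : v ∈ ({ℓ, p}ᶜ : Set V) then y' ⟨v, h⟩
              else if v = ℓ then c else 0 with hext
          have hextℓ : ext ℓ = c := by
            rw [hext]; simp [hmem]
          have hextp : ext p = 0 := by
            rw [hext]; simp [hmem, Ne.symm hlp]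
          have hexts : ∀ u : (({ℓ, p}ᶜ : Set V) : Type), ext ↑u = y' u := by
            intro u; rw [hext]; simp [u.2]
          funext v
          show M.mulVec ext v = 0
          by_cases hvℓ : v = ℓ
          · subst hvℓ
            rw [_root_.mulVec_apply, row_single hM hℓnb, hextp, mul_zero]
          by_cases hvp : v = p
          · subst hvp
            rw [_root_.mulVec_apply, sum_split2 hlp (fun u => M v u * ext u)]
            rw [hextℓ, hM.1 v, zero_mul, add_zero]
            have : ∑ u : (({ℓ, p}ᶜ : Set V) : Type), M v ↑u * ext ↑u
                = ∑ u : (({ℓ, p}ᶜ : Set V) : Type), M v ↑u * y' u := by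
              apply Finset.sum_congr rfl
              intro u _
              rw [hexts u]
            rw [this, hc]
            field_simp
            ring
          · have hvs : v ∈ ({ℓ, p}ᶜ : Set V) := (hmem v).mpr ⟨hvℓ, hvp⟩
            rw [_root_.mulVec_apply, sum_split2 hlp (fun u => M v u * ext u)]
            rw [hextℓ, hextp, mul_zero, hcolℓ v hvp, zero_mul, zero_add, zero_add]
            have h0 := congrFun hy' ⟨v, hvs⟩
            rw [_root_.mulVec_apply] at h0
            calc ∑ u : (({ℓ, p}ᶜ : Set V) : Type), M v ↑u * ext ↑u
                = ∑ u : (({ℓ, p}ᶜ : Set V) : Type), M v ↑u * y' u := by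
                  apply Finset.sum_congr rfl
                  intro u _
                  rw [hexts u]
              _ = 0 := h0
        -- null support correspondence
        have f7 : ∀ v : (({ℓ, p}ᶜ : Set V) : Type),
            ((v : V) ∈ nullSupp M ↔ v ∈ nullSupp (M.submatrix
              ((↑) : (({ℓ, p}ᶜ : Set V) : Type) → V)
              ((↑) : (({ℓ, p}ᶜ : Set V) : Type) → V))) := by
          intro v
          constructor
          · rintro ⟨y, hy, hyv⟩
            exact ⟨fun u => y ↑u, f5 y hy, hyv⟩
          · rintro ⟨y', hy', hyv⟩
            refine ⟨_, f6 y' hy', ?_⟩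
            simpa [v.2] using hyv
        -- Wset correspondence
        have f8 : ∀ v : (({ℓ, p}ᶜ : Set V) : Type),
            ((v : V) ∈ Wset G M ↔ v ∈ Wset (G.induce ({ℓ, p}ᶜ : Set V)) (M.submatrix
              ((↑) : (({ℓ, p}ᶜ : Set V) : Type) → V)
              ((↑) : (({ℓ, p}ᶜ : Set V) : Type) → V))) := by
          intro v
          constructor
          · rintro (h | ⟨s₁, hs₁, ha⟩)
            · exact Or.inl ((f7 v).mp h)
            · have hs₁p : s₁ ≠ p := fun h' => hpS (h' ▸ hs₁)
              have hs₁ℓ : s₁ ≠ ℓ := by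
                rintro rfl
                exact ((hmem ↑v).mp v.2).2 (hℓnb ↑v ha.symm)
              refine Or.inr ⟨⟨s₁, (hmem s₁).mpr ⟨hs₁ℓ, hs₁p⟩⟩, ((f7 _).mp hs₁), ha⟩
          · rintro (h | ⟨s₁, hs₁, ha⟩)
            · exact Or.inl ((f7 v).mpr h)
            · exact Or.inr ⟨↑s₁, (f7 s₁).mpr hs₁, ha⟩
        have hpW : p ∈ Wset G M := Or.inr ⟨ℓ, hℓS, hadj.symm⟩
        have hzp : z p = 0 := by
          have h0 := hrow ℓ (Or.inl hℓS)
          rw [_root_.mulVec_apply, row_single hM hℓnb z] at h0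
          simpa using (mul_eq_zero.mp h0).resolve_left hMℓp
        have hcard' : Fintype.card (({ℓ, p}ᶜ : Set V) : Type) ≤ n := by
          have h1 : Fintype.card (({ℓ, p}ᶜ : Set V) : Type) < Fintype.card V := by
            apply Fintype.card_lt_of_injective_not_surjective
              ((↑) : (({ℓ, p}ᶜ : Set V) : Type) → V) Subtype.val_injective
            intro hsurj
            obtain ⟨y, hy⟩ := hsurj ℓ
            have hy2 := ((hmem ↑y).mp y.2).1
            rw [hy] at hy2
            exact hy2 rfl
          omega
        have hind := ih (G.induce ({ℓ, p}ᶜ : Set V))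
          (M.submatrix ((↑) : (({ℓ, p}ᶜ : Set V) : Type) → V)
            ((↑) : (({ℓ, p}ᶜ : Set V) : Type) → V)) hcard'
          (isAcyclic_induce hG _) (mpattern_induce hM _) (fun u => z ↑u)
          (fun v hv => hz ↑v (fun h => hv ((f8 v).mp h)))
          (fun w hw => by
            have h0 := hrow ↑w ((f8 w).mpr hw)
            rw [_root_.mulVec_apply, sum_split2 hlp (fun u => M ↑w u * z u)] at h0
            rw [hcolℓ ↑w ((hmem ↑w).mp w.2).2, zero_mul, hzp, mul_zero] at h0
            rw [_root_.mulVec_apply]; simpa using h0)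
        funext v
        show M.mulVec z v = 0
        by_cases hvℓ : v = ℓ
        · subst hvℓ
          rw [_root_.mulVec_apply, row_single hM hℓnb z, hzp, mul_zero]
        by_cases hvp : v = p
        · subst hvp
          exact hrow v hpW
        · have hvs : v ∈ ({ℓ, p}ᶜ : Set V) := (hmem v).mpr ⟨hvℓ, hvp⟩
          have h0 := congrFun hind ⟨v, hvs⟩
          rw [_root_.mulVec_apply] at h0
          rw [_root_.mulVec_apply, sum_split2 hlp (fun u => M v u * z u)]
          rw [hcolℓ v hvp, zero_mul, hzp, mul_zero, zero_add, zero_add]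
          exact h0
      · -- isolated case
        have hiso : ∀ y, ¬ G.Adj ℓ y := by
          intro y hy
          exact hadj ((hℓnb y hy) ▸ hy)
        have hcolℓ : ∀ u, M u ℓ = 0 := by
          intro u
          by_cases huℓ : u = ℓ
          · exact huℓ ▸ hM.1 ℓ
          · exact not_adj_entry_zero hM (fun h => hiso u h.symm)
        have hmem : ∀ v : V, v ∈ ({ℓ}ᶜ : Set V) ↔ v ≠ ℓ := by
          intro v; simp
        have f5 : ∀ y : V → F, M.mulVec y = 0 →
            (M.submatrix ((↑) : (({ℓ}ᶜ : Set V) : Type) → V)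
              ((↑) : (({ℓ}ᶜ : Set V) : Type) → V)).mulVec (fun u => y ↑u) = 0 := by
          intro y hy
          funext w
          have h0 := congrFun hy ↑w
          rw [_root_.mulVec_apply, sum_split1 ℓ (fun u => M ↑w u * y u)] at h0
          rw [hcolℓ ↑w, zero_mul, zero_add] at h0
          exact h0
        have f6 : ∀ y' : (({ℓ}ᶜ : Set V) : Type) → F,
            (M.submatrix ((↑) : (({ℓ}ᶜ : Set V) : Type) → V)
              ((↑) : (({ℓ}ᶜ : Set V) : Type) → V)).mulVec y' = 0 →
            M.mulVec (fun v => if h : v ∈ ({ℓ}ᶜ : Set V) then y' ⟨v, h⟩ else 0) = 0 := by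
          intro y' hy'
          set ext : V → F := fun v => if h : v ∈ ({ℓ}ᶜ : Set V) then y' ⟨v, h⟩ else 0 with hext
          have hextℓ : ext ℓ = 0 := by rw [hext]; simp
          have hexts : ∀ u : (({ℓ}ᶜ : Set V) : Type), ext ↑u = y' u := by
            intro u; rw [hext]; simp [u.2]
          funext v
          show M.mulVec ext v = 0
          by_cases hvℓ : v = ℓ
          · subst hvℓ
            rw [_root_.mulVec_apply, row_isolated hM hiso]
          · have hvs : v ∈ ({ℓ}ᶜ : Set V) := (hmem v).mpr hvℓ
            rw [_root_.mulVec_apply, sum_split1 ℓ (fun u => M v u * ext u)]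
            rw [hextℓ, mul_zero, zero_add]
            have h0 := congrFun hy' ⟨v, hvs⟩
            rw [_root_.mulVec_apply] at h0
            calc ∑ u : (({ℓ}ᶜ : Set V) : Type), M v ↑u * ext ↑u
                = ∑ u : (({ℓ}ᶜ : Set V) : Type), M v ↑u * y' u := by
                  apply Finset.sum_congr rfl
                  intro u _
                  rw [hexts u]
              _ = 0 := h0
        have f7 : ∀ v : (({ℓ}ᶜ : Set V) : Type),
            ((v : V) ∈ nullSupp M ↔ v ∈ nullSupp (M.submatrix
              ((↑) : (({ℓ}ᶜ : Set V) : Type) → V)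
              ((↑) : (({ℓ}ᶜ : Set V) : Type) → V))) := by
          intro v
          constructor
          · rintro ⟨y, hy, hyv⟩
            exact ⟨fun u => y ↑u, f5 y hy, hyv⟩
          · rintro ⟨y', hy', hyv⟩
            refine ⟨_, f6 y' hy', ?_⟩
            simpa [v.2] using hyv
        have f8 : ∀ v : (({ℓ}ᶜ : Set V) : Type),
            ((v : V) ∈ Wset G M ↔ v ∈ Wset (G.induce ({ℓ}ᶜ : Set V)) (M.submatrix
              ((↑) : (({ℓ}ᶜ : Set V) : Type) → V)
              ((↑) : (({ℓ}ᶜ : Set V) : Type) → V))) := by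
          intro v
          constructor
          · rintro (h | ⟨s₁, hs₁, ha⟩)
            · exact Or.inl ((f7 v).mp h)
            · have hs₁ℓ : s₁ ≠ ℓ := by
                rintro rfl
                exact hiso ↑v ha.symm
              refine Or.inr ⟨⟨s₁, (hmem s₁).mpr hs₁ℓ⟩, ((f7 _).mp hs₁), ha⟩
          · rintro (h | ⟨s₁, hs₁, ha⟩)
            · exact Or.inl ((f7 v).mpr h)
            · exact Or.inr ⟨↑s₁, (f7 s₁).mpr hs₁, ha⟩
        have hcard' : Fintype.card (({ℓ}ᶜ : Set V) : Type) ≤ n := by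
          have h1 : Fintype.card (({ℓ}ᶜ : Set V) : Type) < Fintype.card V := by
            apply Fintype.card_lt_of_injective_not_surjective
              ((↑) : (({ℓ}ᶜ : Set V) : Type) → V) Subtype.val_injective
            intro hsurj
            obtain ⟨y, hy⟩ := hsurj ℓ
            have hy2 := (hmem ↑y).mp y.2
            rw [hy] at hy2
            exact hy2 rfl
          omega
        have hind := ih (G.induce ({ℓ}ᶜ : Set V))
          (M.submatrix ((↑) : (({ℓ}ᶜ : Set V) : Type) → V)
            ((↑) : (({ℓ}ᶜ : Set V) : Type) → V)) hcard'
          (isAcyclic_induce hG _) (mpattern_induce hM _) (fun u => z ↑u)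
          (fun v hv => hz ↑v (fun h => hv ((f8 v).mp h)))
          (fun w hw => by
            have h0 := hrow ↑w ((f8 w).mpr hw)
            rw [_root_.mulVec_apply, sum_split1 ℓ (fun u => M ↑w u * z u)] at h0
            rw [hcolℓ ↑w, zero_mul, zero_add] at h0
            exact h0)
        funext v
        show M.mulVec z v = 0
        by_cases hvℓ : v = ℓ
        · subst hvℓ
          rw [_root_.mulVec_apply, row_isolated hM hiso]
        · have hvs : v ∈ ({ℓ}ᶜ : Set V) := (hmem v).mpr hvℓ
          have h0 := congrFun hind ⟨v, hvs⟩
          rw [_root_.mulVec_apply] at h0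
          rw [_root_.mulVec_apply, sum_split1 ℓ (fun u => M v u * z u)]
          rw [hcolℓ v, zero_mul, zero_add]
          exact h0

end KL


theorem stmt9 {V : Type} [Fintype V] [DecidableEq V] {F : Type} [Field F]
    (G : SimpleGraph V) (hG : G.IsAcyclic) (M : Matrix V V F)
    (hM : MPattern0 G M) (x : V → F) :
    -- W is the vertex set of the S-set 𝓕_S(F): the null support together with
    -- its neighborhood
    M.mulVec x = 0 ↔
      ((M.submatrix
          (fun w : ↥(nullSupp M ∪ {u : V | ∃ s ∈ nullSupp M, G.Adj u s}) => (w : V))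
          (fun w : ↥(nullSupp M ∪ {u : V | ∃ s ∈ nullSupp M, G.Adj u s}) => (w : V))).mulVec
          (fun w => x (w : V)) = 0 ∧
        ∀ v : V, v ∉ nullSupp M ∪ {u : V | ∃ s ∈ nullSupp M, G.Adj u s} → x v = 0) := by
  constructor
  · intro hx
    have hvan : ∀ v : V, v ∉ nullSupp M ∪ {u : V | ∃ s ∈ nullSupp M, G.Adj u s} → x v = 0 := by
      intro v hv
      exact null_vanish hx (fun h => hv (Or.inl h))
    refine ⟨?_, hvan⟩
    funext w
    have h0 := congrFun hx ↑w
    rw [_root_.mulVec_apply] at h0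
    rw [_root_.mulVec_apply]
    simp only [Matrix.submatrix_apply]
    rw [← Finset.sum_subtype
      ((nullSupp M ∪ {u : V | ∃ s ∈ nullSupp M, G.Adj u s}).toFinset) (by simp)
      (fun u => M ↑w u * x u)]
    rw [Finset.sum_subset (Finset.subset_univ _)
      (fun u _ hu => by rw [hvan u (by simpa using hu), mul_zero])]
    exact h0
  · rintro ⟨h1, h2⟩
    apply KLaux F (Fintype.card V) G M le_rfl hG hM x (fun v hv => h2 v hv)
    intro w hw
    have h0 := congrFun h1 ⟨w, hw⟩
    rw [_root_.mulVec_apply] at h0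
    simp only [Matrix.submatrix_apply] at h0
    have hsum : ∑ u, M w u * x u
        = ∑ u : ↥(nullSupp M ∪ {u : V | ∃ s ∈ nullSupp M, G.Adj u s}), M w ↑u * x ↑u := by
      rw [← Finset.sum_subtype
        ((nullSupp M ∪ {u : V | ∃ s ∈ nullSupp M, G.Adj u s}).toFinset) (by simp)
        (fun u => M w u * x u)]
      exact (Finset.sum_subset (Finset.subset_univ _)
        (fun u _ hu => by rw [h2 u (by simpa using hu), mul_zero])).symm
    rw [_root_.mulVec_apply, hsum]
    exact h0
end

section
/- Let F be a forest and M ∈ M_{F,0}(F). A vertex v lies in Supp(M) if and only if v belongs to every maximum independent set of F. -/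
open SimpleGraph Matrix
open scoped Classical

section Aux

set_option linter.unusedSectionVars false

variable {V : Type} [Fintype V] [DecidableEq V]

/-! ### Graph-theoretic structure lemmas -/

lemma exists_S_leaf {G : SimpleGraph V} (hG : G.IsAcyclic)
    (S : Finset V) (hE : ∃ a ∈ S, ∃ b ∈ S, G.Adj a b) :
    ∃ u ∈ S, ∃ w ∈ S, G.Adj u w ∧ ∀ t ∈ S, G.Adj u t → t = w := by
  classical
  set P : ℕ → Prop := fun m =>
    ∃ x y : V, ∃ p : G.Walk x y, p.IsPath ∧ (∀ t ∈ p.support, t ∈ S) ∧ p.length = m with hP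
  obtain ⟨a, haS, b, hbS, hab⟩ := hE
  have hP1 : P 1 := by
    refine ⟨a, b, (SimpleGraph.Path.singleton hab).1, (SimpleGraph.Path.singleton hab).2, ?_, ?_⟩
    · intro t ht
      simp only [SimpleGraph.Path.singleton, SimpleGraph.Walk.support_cons,
        SimpleGraph.Walk.support_nil, List.mem_cons, List.mem_singleton] at ht
      rcases ht with rfl | ht
      · exact haS
      · simp at ht; subst ht; exact hbS
    · simp [SimpleGraph.Path.singleton]
  have hbound : ∀ m, P m → m < Fintype.card V := by
    rintro m ⟨x, y, p, hp, -, rfl⟩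
    exact hp.length_lt
  set N := Fintype.card V with hN
  have h1N : 1 ≤ N := le_of_lt (hbound 1 hP1)
  set n := Nat.findGreatest P N with hn
  have hPn : P n := Nat.findGreatest_spec h1N hP1
  have h1n : 1 ≤ n := Nat.le_findGreatest h1N hP1
  have hmax : ∀ m, n < m → ¬ P m := by
    intro m hm hPm
    rcases le_or_gt m N with h | h
    · exact Nat.findGreatest_is_greatest hm h hPm
    · exact absurd (hbound m hPm) (by omega)
  obtain ⟨x, y, p, hp, hsup, hlen⟩ := hPn
  have hposlen : 0 < p.length := by omega
  refine ⟨x, hsup x p.start_mem_support, p.getVert 1, ?_, ?_, ?_⟩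
  · apply hsup
    rw [SimpleGraph.Walk.mem_support_iff_exists_getVert]
    exact ⟨1, rfl, by omega⟩
  · have := p.adj_getVert_succ (i := 0) hposlen
    simpa using this
  · intro t htS hadj
    have htx : t ≠ x := hadj.ne'
    have htsup : t ∈ p.support := by
      by_contra htns
      refine hmax (n+1) (by omega) ⟨t, y, SimpleGraph.Walk.cons hadj.symm p, ?_, ?_, by simp [hlen]⟩
      · rw [SimpleGraph.Walk.cons_isPath_iff]; exact ⟨hp, htns⟩
      · intro s hs
        rw [SimpleGraph.Walk.support_cons, List.mem_cons] at hs
        rcases hs with rfl | hs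
        · exact htS
        · exact hsup s hs
    have hq : (⟨p.takeUntil t htsup, hp.takeUntil htsup⟩ : G.Path x t)
        = SimpleGraph.Path.singleton hadj := hG.path_unique _ _
    have hqlen : (p.takeUntil t htsup).length = 1 := by
      have := congrArg (fun q : G.Path x t => q.1.length) hq
      simpa [SimpleGraph.Path.singleton] using this
    have hspec := p.take_spec htsup
    have := congrArg (fun q : G.Walk x y => q.getVert 1) hspec
    simp only [SimpleGraph.Walk.getVert_append, hqlen] at this
    rw [← this]
    simp

lemma exists_good_leaf {G : SimpleGraph V} (hG : G.IsAcyclic) :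
    ∀ n (S : Finset V), S.card ≤ n → (∃ a ∈ S, ∃ b ∈ S, G.Adj a b) →
    ∃ u ∈ S, ∃ w ∈ S, G.Adj u w ∧ (∀ t ∈ S, G.Adj u t → t = w) ∧
      ((∃ s ∈ S, s ≠ u ∧ G.Adj w s ∧ ∀ t ∈ S, G.Adj s t → t = w) ∨
       (∃ p : V, ∀ t ∈ S, G.Adj w t → t = u ∨ t = p)) := by
  intro n
  induction n with
  | zero =>
    rintro S hS ⟨a, haS, -⟩
    simp [Finset.card_eq_zero, Nat.le_zero] at hS
    subst hS; simp at haS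
  | succ n IH =>
    intro S hS hE
    obtain ⟨a, haS, b, hbS, hab, hA⟩ := exists_S_leaf hG S hE
    by_cases hbleaf : ∀ t ∈ S, G.Adj b t → t = a
    · exact ⟨a, haS, b, hbS, hab, hA, Or.inr ⟨a, fun t ht h => Or.inl (hbleaf t ht h)⟩⟩
    push_neg at hbleaf
    obtain ⟨c, hcS, hbc, hca⟩ := hbleaf
    have hba : b ≠ a := hab.ne'
    set S' := S.erase a with hS'
    have hadj_a : ∀ t, G.Adj t a → t ∈ S → t = b := fun t h ht => hA t ht h.symm
    have hcard' : S'.card ≤ n := by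
      rw [hS']
      have := Finset.card_erase_add_one haS
      omega
    have hbS' : b ∈ S' := Finset.mem_erase.2 ⟨hba, hbS⟩
    have hcS' : c ∈ S' := Finset.mem_erase.2 ⟨hca, hcS⟩
    obtain ⟨u', hu'S', w', hw'S', hu'w', hleaf', hdisj⟩ :=
      IH S' hcard' ⟨b, hbS', c, hcS', hbc⟩
    have hu'S : u' ∈ S := Finset.mem_of_mem_erase hu'S'
    have hw'S : w' ∈ S := Finset.mem_of_mem_erase hw'S'
    have hu'a : u' ≠ a := (Finset.mem_erase.1 hu'S').1
    have hw'a : w' ≠ a := (Finset.mem_erase.1 hw'S').1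
    have hlift : ∀ z ∈ S', z ≠ b → (∀ t ∈ S', G.Adj z t → t = w') →
        ∀ t ∈ S, G.Adj z t → t = w' := by
      intro z hzS' hzb hz t htS hzt
      by_cases hta : t = a
      · subst hta; exact absurd (hadj_a z hzt (Finset.mem_of_mem_erase hzS')) hzb
      · exact hz t (Finset.mem_erase.2 ⟨hta, htS⟩) hzt
    by_cases hub : u' = b
    · subst hub
      refine ⟨a, haS, u', hu'S, hab, hA, Or.inr ⟨w', ?_⟩⟩
      intro t ht h
      by_cases hta : t = a
      · exact Or.inl hta
      · exact Or.inr (hleaf' t (Finset.mem_erase.2 ⟨hta, ht⟩) h)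
    · have hleafS : ∀ t ∈ S, G.Adj u' t → t = w' := hlift u' hu'S' hub hleaf'
      rcases hdisj with ⟨s', hs'S', hs'u, hws', hs'leaf'⟩ | ⟨p', hp'⟩
      · by_cases hsb : s' = b
        · subst hsb
          refine ⟨a, haS, s', Finset.mem_of_mem_erase hs'S', hab, hA, Or.inr ⟨w', ?_⟩⟩
          intro t ht h
          by_cases hta : t = a
          · exact Or.inl hta
          · exact Or.inr (hs'leaf' t (Finset.mem_erase.2 ⟨hta, ht⟩) h)
        · exact ⟨u', hu'S, w', hw'S, hu'w', hleafS,
            Or.inl ⟨s', Finset.mem_of_mem_erase hs'S', hs'u, hws',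
              hlift s' hs'S' hsb hs'leaf'⟩⟩
      · by_cases hwb : w' = b
        · subst hwb
          refine ⟨u', hu'S, w', hw'S, hu'w', hleafS,
            Or.inl ⟨a, haS, fun h => hu'a h.symm, hab.symm, fun t ht h => hA t ht h⟩⟩
        · refine ⟨u', hu'S, w', hw'S, hu'w', hleafS, Or.inr ⟨p', ?_⟩⟩
          intro t ht h
          by_cases hta : t = a
          · subst hta; exact absurd (hadj_a w' h hw'S) hwb
          · exact hp' t (Finset.mem_erase.2 ⟨hta, ht⟩) h

/-! ### Independent set machinery -/

def IndOn (G : SimpleGraph V) (S I : Finset V) : Prop :=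
  I ⊆ S ∧ ∀ a ∈ I, ∀ b ∈ I, a ≠ b → ¬ G.Adj a b

def MaxIndOn (G : SimpleGraph V) (S I : Finset V) : Prop :=
  IndOn G S I ∧ ∀ J : Finset V, IndOn G S J → J.card ≤ I.card

lemma exists_maxIndOn (G : SimpleGraph V) (S : Finset V) : ∃ I, MaxIndOn G S I := by
  classical
  obtain ⟨I, hI, hmax⟩ := Finset.exists_max_image
    (S.powerset.filter (fun I => IndOn G S I)) Finset.card
    ⟨∅, Finset.mem_filter.2 ⟨Finset.empty_mem_powerset S, Finset.empty_subset _,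
      fun a ha => absurd ha (Finset.notMem_empty a)⟩⟩
  simp only [Finset.mem_filter, Finset.mem_powerset] at hI
  refine ⟨I, hI.2, fun J hJ => hmax J ?_⟩
  simp only [Finset.mem_filter, Finset.mem_powerset]
  exact ⟨hJ.1, hJ⟩

lemma pairwise_insert_aux {G : SimpleGraph V} {J : Finset V} {z : V}
    (hz : ∀ b ∈ J, ¬ G.Adj z b) (hJ : ∀ a ∈ J, ∀ b ∈ J, a ≠ b → ¬ G.Adj a b) :
    ∀ a ∈ insert z J, ∀ b ∈ insert z J, a ≠ b → ¬ G.Adj a b := by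
  intro a ha b hb hne
  rcases Finset.mem_insert.1 ha with h1 | h1
  · rcases Finset.mem_insert.1 hb with h2 | h2
    · subst h1; subst h2; exact absurd rfl hne
    · subst h1; exact hz b h2
  · rcases Finset.mem_insert.1 hb with h2 | h2
    · subst h2; exact fun h => hz a h1 h.symm
    · exact hJ a h1 b h2 hne

section leafy
variable {G : SimpleGraph V} {S : Finset V} {u w : V}

lemma ind_insert_leaf (huS : u ∈ S) (hleaf : ∀ t ∈ S, G.Adj u t → t = w)
    {J : Finset V} (hJ : IndOn G (S \ {u, w}) J) :
    IndOn G S (insert u J) ∧ (insert u J).card = J.card + 1 := by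
  have hJS : ∀ t ∈ J, t ∈ S ∧ t ≠ u ∧ t ≠ w := by
    intro t ht
    have := hJ.1 ht
    simp only [Finset.mem_sdiff, Finset.mem_insert, Finset.mem_singleton] at this
    exact ⟨this.1, fun h => this.2 (Or.inl h), fun h => this.2 (Or.inr h)⟩
  have huJ : u ∉ J := fun h => (hJS u h).2.1 rfl
  have hnadj : ∀ b ∈ J, ¬ G.Adj u b := by
    intro b hb hadj
    exact (hJS b hb).2.2 (hleaf b (hJS b hb).1 hadj)
  refine ⟨⟨?_, ?_⟩, Finset.card_insert_of_notMem huJ⟩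
  · intro t ht
    rcases Finset.mem_insert.1 ht with rfl | ht
    · exact huS
    · exact (hJS t ht).1
  · exact pairwise_insert_aux hnadj hJ.2

lemma ind_sdiff (huw : G.Adj u w) {I : Finset V} (hI : IndOn G S I) :
    IndOn G (S \ {u, w}) (I \ {u, w}) ∧ I.card ≤ (I \ {u, w}).card + 1 := by
  constructor
  · constructor
    · exact Finset.sdiff_subset_sdiff hI.1 (le_refl _)
    · intro a ha b hb hne
      exact hI.2 a (Finset.mem_sdiff.1 ha).1 b (Finset.mem_sdiff.1 hb).1 hne
  · have hsplit := Finset.card_sdiff_add_card_inter I {u, w}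
    have hint : (I ∩ {u, w}).card ≤ 1 := by
      by_cases hu : u ∈ I
      · by_cases hw : w ∈ I
        · exact absurd huw (hI.2 u hu w hw huw.ne)
        · have : I ∩ {u, w} ⊆ {u} := by
            intro t ht
            simp only [Finset.mem_inter, Finset.mem_insert, Finset.mem_singleton] at ht
            rcases ht.2 with rfl | rfl
            · simp
            · exact absurd ht.1 hw
          simpa using Finset.card_le_card this
      · have : I ∩ {u, w} ⊆ {w} := by
          intro t ht
          simp only [Finset.mem_inter, Finset.mem_insert, Finset.mem_singleton] at ht
          rcases ht.2 with rfl | rfl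
          · exact absurd ht.1 hu
          · simp
        simpa using Finset.card_le_card this
    omega

lemma max_insert_leaf (huS : u ∈ S) (huw : G.Adj u w)
    (hleaf : ∀ t ∈ S, G.Adj u t → t = w)
    {J : Finset V} (hJ : MaxIndOn G (S \ {u, w}) J) :
    MaxIndOn G S (insert u J) := by
  obtain ⟨hind, hcard⟩ := ind_insert_leaf huS hleaf hJ.1
  refine ⟨hind, fun I hI => ?_⟩
  obtain ⟨hI', hle⟩ := ind_sdiff huw hI
  have := hJ.2 _ hI'
  omega

lemma max_insert_w (hwS : w ∈ S) (huS : u ∈ S) (huw : G.Adj u w)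
    (hleaf : ∀ t ∈ S, G.Adj u t → t = w)
    {J : Finset V} (hJ : MaxIndOn G (S \ {u, w}) J)
    (hno : ∀ b ∈ J, ¬ G.Adj w b) :
    MaxIndOn G S (insert w J) := by
  have hJS : ∀ t ∈ J, t ∈ S ∧ t ≠ u ∧ t ≠ w := by
    intro t ht
    have := hJ.1.1 ht
    simp only [Finset.mem_sdiff, Finset.mem_insert, Finset.mem_singleton] at this
    exact ⟨this.1, fun h => this.2 (Or.inl h), fun h => this.2 (Or.inr h)⟩
  have hwJ : w ∉ J := fun h => (hJS w h).2.2 rfl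
  have hcard : (insert w J).card = J.card + 1 := Finset.card_insert_of_notMem hwJ
  refine ⟨⟨?_, ?_⟩, ?_⟩
  · intro t ht
    rcases Finset.mem_insert.1 ht with rfl | ht
    · exact hwS
    · exact (hJS t ht).1
  · exact pairwise_insert_aux hno hJ.1.2
  · intro I hI
    obtain ⟨hI', hle⟩ := ind_sdiff huw hI
    have := hJ.2 _ hI'
    omega

lemma max_down (huS : u ∈ S) (hwS : w ∈ S) (huw : G.Adj u w)
    (hleaf : ∀ t ∈ S, G.Adj u t → t = w)
    {I : Finset V} (hI : MaxIndOn G S I) :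
    (u ∈ I ∧ MaxIndOn G (S \ {u, w}) (I.erase u)) ∨
    (u ∉ I ∧ w ∈ I ∧ MaxIndOn G (S \ {u, w}) (I.erase w)) := by
  have key : ∀ z ∈ I, z ∈ ({u, w} : Finset V) →
      (∀ t ∈ I, t ≠ z → t ∉ ({u, w} : Finset V)) →
      MaxIndOn G (S \ {u, w}) (I.erase z) := by
    intro z hz hzuw hothers
    refine ⟨⟨?_, ?_⟩, ?_⟩
    · intro t ht
      have htz := Finset.mem_erase.1 ht
      simp only [Finset.mem_sdiff]
      exact ⟨hI.1.1 htz.2, hothers t htz.2 htz.1⟩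
    · intro a ha b hb hne
      exact hI.1.2 a (Finset.mem_of_mem_erase ha) b (Finset.mem_of_mem_erase hb) hne
    · intro J hJ
      have h1 := (ind_insert_leaf huS hleaf hJ).2
      have h2 := hI.2 _ (ind_insert_leaf huS hleaf hJ).1
      have h3 := Finset.card_erase_add_one hz
      omega
  by_cases hu : u ∈ I
  · left
    refine ⟨hu, key u hu (by simp) ?_⟩
    intro t ht htu
    simp only [Finset.mem_insert, Finset.mem_singleton]
    push_neg
    refine ⟨htu, ?_⟩
    rintro rfl
    exact hI.1.2 u hu t ht huw.ne huw
  · right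
    have hw : w ∈ I := by
      by_contra hw
      have huI : u ∉ I := hu
      have hind : IndOn G S (insert u I) := by
        refine ⟨?_, ?_⟩
        · intro t ht
          rcases Finset.mem_insert.1 ht with rfl | ht
          · exact huS
          · exact hI.1.1 ht
        · refine pairwise_insert_aux ?_ hI.1.2
          intro b hb h
          exact hw ((hleaf b (hI.1.1 hb) h) ▸ hb)
      have := hI.2 _ hind
      rw [Finset.card_insert_of_notMem huI] at this
      omega
    refine ⟨hu, hw, key w hw (by simp) ?_⟩
    intro t ht htw
    simp only [Finset.mem_insert, Finset.mem_singleton]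
    push_neg
    refine ⟨?_, htw⟩
    rintro rfl
    exact hu ht

end leafy

/-! ### Sum splitting -/

lemma sum_split {F : Type} [Field F] (S : Finset V) {u w : V}
    (hu : u ∈ S) (hw : w ∈ S) (hne : u ≠ w) (f : V → F) :
    ∑ s ∈ S, f s = f u + (f w + ∑ s ∈ S \ {u, w}, f s) := by
  have h1 : S = insert u (insert w (S \ {u, w})) := by
    ext t
    simp only [Finset.mem_insert, Finset.mem_sdiff, Finset.mem_singleton]
    constructor
    · intro ht
      by_cases h : t = u
      · tauto
      by_cases h' : t = w
      · tauto
      · tauto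
    · rintro (rfl | rfl | ⟨ht, -⟩) <;> assumption
  have hw' : w ∉ S \ {u, w} := by simp
  have hu' : u ∉ insert w (S \ {u, w}) := by simp [hne]
  conv_lhs => rw [h1]
  rw [Finset.sum_insert hu', Finset.sum_insert hw']

/-! ### The key induction -/

lemma key_lemma {F : Type} [Field F] (G : SimpleGraph V) (hG : G.IsAcyclic)
    (M : Matrix V V F) (hM : MPattern0 G M) :
    ∀ n (S : Finset V), S.card ≤ n → ∀ v ∈ S,
      ((∃ x : V → F, (∀ r ∈ S, ∑ s ∈ S, M r s * x s = 0) ∧ x v ≠ 0) ↔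
        ∀ I : Finset V, MaxIndOn G S I → v ∈ I) := by
  intro n
  induction n with
  | zero =>
    intro S hS v hv
    rw [Nat.le_zero, Finset.card_eq_zero] at hS
    subst hS
    exact absurd hv (Finset.notMem_empty v)
  | succ n IH =>
    intro S hS v hv
    by_cases hE : ∃ a ∈ S, ∃ b ∈ S, G.Adj a b
    case neg =>
      push_neg at hE
      apply iff_of_true
      · refine ⟨fun t => if t = v then 1 else 0, ?_, by simp⟩
        intro r hr
        refine Finset.sum_eq_zero ?_
        intro s hs
        by_cases h : s = v
        · subst h
          by_cases hrs : r = s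
          · subst hrs; simp [hM.1 r]
          · have : M r s = 0 := by
              by_contra h'
              exact (hE r hr s hs) ((hM.2 r s hrs).1 h')
            simp [this]
        · simp [h]
      · intro I hI
        have hSind : IndOn G S S := ⟨Finset.Subset.refl S, fun a ha b hb _ => hE a ha b hb⟩
        have hIS : I = S := Finset.eq_of_subset_of_card_le hI.1.1 (hI.2 S hSind)
        rw [hIS]; exact hv
    case pos =>
      obtain ⟨u, huS, w, hwS, huw, hleaf, hAB⟩ := exists_good_leaf hG (n+1) S hS hE
      have hne : u ≠ w := huw.ne
      have hMuw : M u w ≠ 0 := (hM.2 u w hne).2 huw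
      have hMwu : M w u ≠ 0 := (hM.2 w u hne.symm).2 huw.symm
      have memS' : ∀ t, t ∈ S \ {u, w} ↔ t ∈ S ∧ t ≠ u ∧ t ≠ w := by
        intro t
        simp only [Finset.mem_sdiff, Finset.mem_insert, Finset.mem_singleton]
        tauto
      have hcard' : (S \ {u, w}).card ≤ n := by
        have hlt : (S \ {u, w}).card < S.card :=
          Finset.card_lt_card ((Finset.ssubset_iff_of_subset Finset.sdiff_subset).2
            ⟨u, huS, by simp⟩)
        omega
      have IH' := IH (S \ {u, w}) hcard'
      have hMzero : ∀ a b : V, a ≠ b → ¬ G.Adj a b → M a b = 0 := by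
        intro a b h1 h2; by_contra h; exact h2 ((hM.2 a b h1).1 h)
      have hMus : ∀ s ∈ S \ {u, w}, M u s = 0 := by
        intro s hs
        obtain ⟨hsS, hsu, hsw⟩ := (memS' s).1 hs
        exact hMzero u s (fun h => hsu h.symm) (fun h => hsw (hleaf s hsS h))
      have hMru : ∀ r ∈ S \ {u, w}, M r u = 0 := by
        intro r hr
        obtain ⟨hrS, hru, hrw⟩ := (memS' r).1 hr
        exact hMzero r u hru (fun h => hrw (hleaf r hrS h.symm))
      -- every null vector vanishes at w
      have hxw0 : ∀ x : V → F, (∀ r ∈ S, ∑ s ∈ S, M r s * x s = 0) → x w = 0 := by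
        intro x hx
        have h0 := (sum_split S huS hwS hne (fun s => M u s * x s)).symm.trans (hx u huS)
        have h1 : ∑ s ∈ S \ {u, w}, M u s * x s = 0 :=
          Finset.sum_eq_zero fun s hs => by rw [hMus s hs, zero_mul]
        simp only [hM.1 u, zero_mul, zero_add, h1, add_zero] at h0
        exact (mul_eq_zero.1 h0).resolve_left hMuw
      -- restriction of null vectors
      have hrestrict : ∀ x : V → F, (∀ r ∈ S, ∑ s ∈ S, M r s * x s = 0) →
          ∀ r ∈ S \ {u, w}, ∑ s ∈ S \ {u, w}, M r s * x s = 0 := by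
        intro x hx r hr
        have h0 := (sum_split S huS hwS hne (fun s => M r s * x s)).symm.trans
          (hx r ((memS' r).1 hr).1)
        simp only [hMru r hr, zero_mul, zero_add, hxw0 x hx, mul_zero] at h0
        exact h0
      -- extension of null vectors
      have hextend : ∀ y : V → F, (∀ r ∈ S \ {u, w}, ∑ s ∈ S \ {u, w}, M r s * y s = 0) →
          ∃ x : V → F, (∀ r ∈ S, ∑ s ∈ S, M r s * x s = 0) ∧
            x u = -(∑ s ∈ S \ {u, w}, M w s * y s) / M w u ∧
            ∀ t ∈ S \ {u, w}, x t = y t := by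
        intro y hy
        obtain ⟨x, hxu, hxw, hxS'⟩ :
            ∃ x : V → F, x u = -(∑ s ∈ S \ {u, w}, M w s * y s) / M w u ∧ x w = 0 ∧
              ∀ t, t ≠ u → t ≠ w → x t = y t :=
          ⟨fun t => if t = u then -(∑ s ∈ S \ {u, w}, M w s * y s) / M w u
              else if t = w then 0 else y t,
            by simp, by simp [hne.symm], fun t h1 h2 => by simp [h1, h2]⟩
        have hsum' : ∀ r, ∑ s ∈ S \ {u, w}, M r s * x s = ∑ s ∈ S \ {u, w}, M r s * y s := by
          intro r
          refine Finset.sum_congr rfl fun s hs => ?_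
          obtain ⟨-, h1, h2⟩ := (memS' s).1 hs
          rw [hxS' s h1 h2]
        refine ⟨x, ?_, hxu, fun t ht => hxS' t ((memS' t).1 ht).2.1 ((memS' t).1 ht).2.2⟩
        intro r hrS
        rw [sum_split S huS hwS hne (fun s => M r s * x s)]
        by_cases hru : r = u
        · rw [hru]
          have e1 : ∑ s ∈ S \ {u, w}, M u s * x s = 0 :=
            Finset.sum_eq_zero fun s hs => by rw [hMus s hs, zero_mul]
          simp only [hM.1 u, zero_mul, hxw, mul_zero, e1, add_zero, zero_add]
        by_cases hrw : r = w
        · rw [hrw]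
          simp only [hM.1 w, zero_mul, zero_add, hxu, hsum' w, hxw, mul_zero]
          have hdiv : M w u * ((-∑ s ∈ S \ {u, w}, M w s * y s) / M w u)
              = -∑ s ∈ S \ {u, w}, M w s * y s := by
            field_simp
          rw [hdiv]
          exact neg_add_cancel _
        · have hrS' : r ∈ S \ {u, w} := (memS' r).2 ⟨hrS, hru, hrw⟩
          simp only [hMru r hrS', zero_mul, zero_add, hxw, mul_zero, hsum' r]
          exact hy r hrS'
      by_cases hvu : v = u
      · rw [hvu]
        rcases hAB with ⟨s0, hs0S, hs0u, hws0, hs0leaf⟩ | ⟨p, hp⟩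
        · -- Case A : w has another leaf neighbour s0; both sides true
          have hs0w : s0 ≠ w := hws0.ne'
          have hs0S' : s0 ∈ S \ {u, w} := (memS' s0).2 ⟨hs0S, hs0u, hs0w⟩
          have hMws0 : M w s0 ≠ 0 := (hM.2 w s0 (fun h => hs0w h.symm)).2 hws0
          have hsum_ind : ∀ r : V, ∑ s ∈ S \ {u, w}, M r s * (if s = s0 then (1:F) else 0)
              = M r s0 := by
            intro r
            have h : ∀ s ∈ S \ {u, w},
                M r s * (if s = s0 then (1:F) else 0) = (if s = s0 then M r s0 else 0) := by
              intro s hs; by_cases h : s = s0 <;> simp [h]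
            rw [Finset.sum_congr rfl h, Finset.sum_ite_eq' (S \ {u, w}) s0 (fun _ => M r s0),
              if_pos hs0S']
          apply iff_of_true
          · have hy : ∀ r ∈ S \ {u, w},
                ∑ s ∈ S \ {u, w}, M r s * (if s = s0 then (1:F) else 0) = 0 := by
              intro r hr
              rw [hsum_ind r]
              obtain ⟨hrS, hru, hrw⟩ := (memS' r).1 hr
              by_cases h : r = s0
              · rw [h]; exact hM.1 s0
              · exact hMzero r s0 h (fun hadj => hrw (hs0leaf r hrS hadj.symm))
            obtain ⟨x, hx, hxu, -⟩ := hextend _ hy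
            refine ⟨x, hx, ?_⟩
            rw [hxu, hsum_ind w]
            exact div_ne_zero (neg_ne_zero.2 hMws0) hMwu
          · intro I hImax
            by_contra huI
            rcases max_down huS hwS huw hleaf hImax with ⟨huI', -⟩ | ⟨-, hwI, hmax'⟩
            · exact huI huI'
            · have hs0J : s0 ∈ I.erase w := by
                by_contra hs0J
                have hind : IndOn G (S \ {u, w}) (insert s0 (I.erase w)) := by
                  refine ⟨?_, pairwise_insert_aux ?_ hmax'.1.2⟩
                  · intro t ht
                    rcases Finset.mem_insert.1 ht with rfl | ht
                    · exact hs0S'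
                    · exact hmax'.1.1 ht
                  · intro b hb hadj
                    have hbS' := hmax'.1.1 hb
                    exact ((memS' b).1 hbS').2.2 (hs0leaf b ((memS' b).1 hbS').1 hadj)
                have := hmax'.2 _ hind
                rw [Finset.card_insert_of_notMem hs0J] at this
                omega
              exact hImax.1.2 w hwI s0 (Finset.mem_of_mem_erase hs0J)
                (fun h => hs0w h.symm) hws0
        · -- Case B : all neighbours of w are u or p
          by_cases hgood : p ∈ S \ {u, w} ∧ G.Adj w p
          · obtain ⟨hpS', hwp⟩ := hgood
            have hMwp : M w p ≠ 0 := (hM.2 w p hwp.ne).2 hwp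
            have hMws : ∀ s ∈ S \ {u, w}, s ≠ p → M w s = 0 := by
              intro s hs hsp
              obtain ⟨hsS, hsu, hsw⟩ := (memS' s).1 hs
              refine hMzero w s (fun h => hsw h.symm) (fun hadj => ?_)
              rcases hp s hsS hadj with h | h
              · exact hsu h
              · exact hsp h
            have hcol : ∀ y : V → F, ∑ s ∈ S \ {u, w}, M w s * y s = M w p * y p := by
              intro y
              exact Finset.sum_eq_single p (fun s hs hsp => by rw [hMws s hs hsp, zero_mul])
                (fun h => absurd hpS' h)
            constructor
            · rintro ⟨x, hx, hxu⟩
              have hxp : x p ≠ 0 := by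
                have h0 := (sum_split S huS hwS hne (fun s => M w s * x s)).symm.trans
                  (hx w hwS)
                simp only [hM.1 w, zero_mul, zero_add, hxw0 x hx, mul_zero, hcol x] at h0
                intro hxp0
                rw [hxp0, mul_zero, add_zero] at h0
                exact (mul_ne_zero hMwu hxu) h0
              have hpall := (IH' p hpS').1 ⟨x, hrestrict x hx, hxp⟩
              intro I hImax
              by_contra huI
              rcases max_down huS hwS huw hleaf hImax with ⟨huI', -⟩ | ⟨-, hwI, hmax'⟩
              · exact huI huI'
              · have hpJ := hpall _ hmax'
                exact hImax.1.2 w hwI p (Finset.mem_of_mem_erase hpJ) hwp.ne hwp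
            · intro hall
              have hpall : ∀ J, MaxIndOn G (S \ {u, w}) J → p ∈ J := by
                intro J hJ
                by_contra hpJ
                have hno : ∀ b ∈ J, ¬ G.Adj w b := by
                  intro b hb hadj
                  obtain ⟨hbS, hbu, hbw⟩ := (memS' b).1 (hJ.1.1 hb)
                  rcases hp b hbS hadj with h | h
                  · exact hbu h
                  · exact hpJ (h ▸ hb)
                have := hall _ (max_insert_w hwS huS huw hleaf hJ hno)
                rcases Finset.mem_insert.1 this with h | h
                · exact hne h
                · exact ((memS' u).1 (hJ.1.1 h)).2.1 rfl
              obtain ⟨y, hy, hyp⟩ := (IH' p hpS').2 hpall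
              obtain ⟨x, hx, hxu, -⟩ := hextend y hy
              refine ⟨x, hx, ?_⟩
              rw [hxu, hcol y]
              exact div_ne_zero (neg_ne_zero.2 (mul_ne_zero hMwp hyp)) hMwu
          · -- w has no neighbour besides u inside S \ {u,w}; both sides false
            have hMws : ∀ s ∈ S \ {u, w}, M w s = 0 := by
              intro s hs
              obtain ⟨hsS, hsu, hsw⟩ := (memS' s).1 hs
              refine hMzero w s (fun h => hsw h.symm) (fun hadj => ?_)
              rcases hp s hsS hadj with h | h
              · exact hsu h
              · exact hgood ⟨h ▸ hs, h ▸ hadj⟩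
            apply iff_of_false
            · rintro ⟨x, hx, hxu⟩
              have h0 := (sum_split S huS hwS hne (fun s => M w s * x s)).symm.trans
                (hx w hwS)
              have hz : ∑ s ∈ S \ {u, w}, M w s * x s = 0 :=
                Finset.sum_eq_zero fun s hs => by rw [hMws s hs, zero_mul]
              simp only [hM.1 w, zero_mul, zero_add, hz, add_zero] at h0
              exact hxu ((mul_eq_zero.1 h0).resolve_left hMwu)
            · intro hall
              obtain ⟨J, hJ⟩ := exists_maxIndOn G (S \ {u, w})
              have hno : ∀ b ∈ J, ¬ G.Adj w b := by
                intro b hb hadj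
                obtain ⟨hbS, hbu, hbw⟩ := (memS' b).1 (hJ.1.1 hb)
                rcases hp b hbS hadj with h | h
                · exact hbu h
                · exact hgood ⟨h ▸ hJ.1.1 hb, h ▸ hadj⟩
              have := hall _ (max_insert_w hwS huS huw hleaf hJ hno)
              rcases Finset.mem_insert.1 this with h | h
              · exact hne h
              · exact ((memS' u).1 (hJ.1.1 h)).2.1 rfl
      · by_cases hvw : v = w
        · -- v = w : both sides false
          rw [hvw]
          apply iff_of_false
          · rintro ⟨x, hx, hxv⟩
            exact hxv (hxw0 x hx)
          · intro hall
            obtain ⟨J, hJ⟩ := exists_maxIndOn G (S \ {u, w})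
            have := hall _ (max_insert_leaf huS huw hleaf hJ)
            rcases Finset.mem_insert.1 this with h | h
            · exact hne h.symm
            · exact ((memS' w).1 (hJ.1.1 h)).2.2 rfl
        · -- v in S \ {u, w}
          have hvS' : v ∈ S \ {u, w} := (memS' v).2 ⟨hv, hvu, hvw⟩
          constructor
          · rintro ⟨x, hx, hxv⟩ I hImax
            have h2 := (IH' v hvS').1 ⟨x, hrestrict x hx, hxv⟩
            rcases max_down huS hwS huw hleaf hImax with ⟨-, hmax'⟩ | ⟨-, -, hmax'⟩
            · exact Finset.mem_of_mem_erase (h2 _ hmax')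
            · exact Finset.mem_of_mem_erase (h2 _ hmax')
          · intro hall
            have h2 : ∀ J, MaxIndOn G (S \ {u, w}) J → v ∈ J := by
              intro J hJ
              have := hall _ (max_insert_leaf huS huw hleaf hJ)
              rcases Finset.mem_insert.1 this with h | h
              · exact absurd h hvu
              · exact h
            obtain ⟨y, hy, hyv⟩ := (IH' v hvS').2 h2
            obtain ⟨x, hx, -, hxS'⟩ := hextend y hy
            exact ⟨x, hx, by rw [hxS' v hvS']; exact hyv⟩

end Aux

theorem stmt10 {V : Type} [Fintype V] [DecidableEq V] {F : Type} [Field F]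
    (G : SimpleGraph V) (hG : G.IsAcyclic) (M : Matrix V V F)
    (hM : MPattern0 G M) (v : V) :
    v ∈ nullSupp M ↔
      ∀ I : Finset V,
        ((↑I : Set V).Pairwise (fun a b => ¬ G.Adj a b) ∧
          ∀ J : Finset V, (↑J : Set V).Pairwise (fun a b => ¬ G.Adj a b) →
            J.card ≤ I.card) →
        v ∈ I := by
  classical
  have h := key_lemma G hG M hM Finset.univ.card Finset.univ (le_refl _) v (Finset.mem_univ v)
  rw [nullSupp]
  simp only [Set.mem_setOf_eq]
  constructor
  · rintro ⟨x, hx0, hxv⟩ I ⟨hIpair, hImax⟩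
    refine h.1 ⟨x, ?_, hxv⟩ I ⟨⟨Finset.subset_univ I, ?_⟩, ?_⟩
    · intro r _
      have := congrFun hx0 r
      simpa [Matrix.mulVec, dotProduct] using this
    · intro a ha b hb hab
      exact hIpair (Finset.mem_coe.2 ha) (Finset.mem_coe.2 hb) hab
    · intro J hJ
      exact hImax J (fun a ha b hb hab => hJ.2 a (Finset.mem_coe.1 ha) b (Finset.mem_coe.1 hb) hab)
  · intro hall
    have hpre : ∀ I, MaxIndOn G Finset.univ I → v ∈ I := by
      intro I hI
      refine hall I ⟨?_, ?_⟩
      · intro a ha b hb hab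
        exact hI.1.2 a (Finset.mem_coe.1 ha) b (Finset.mem_coe.1 hb) hab
      · intro J hJpair
        exact hI.2 J ⟨Finset.subset_univ J,
          fun a ha b hb hab => hJpair (Finset.mem_coe.2 ha) (Finset.mem_coe.2 hb) hab⟩
    obtain ⟨x, hx, hxv⟩ := h.2 hpre
    refine ⟨x, ?_, hxv⟩
    funext r
    have := hx r (Finset.mem_univ r)
    simpa [Matrix.mulVec, dotProduct] using this
end

section
/- If F is a forest, then the rank of its adjacency matrix over any field equals twice the matching number of F. -/
open SimpleGraph Matrix
open scoped Classical

/-- A finite set of edges of G that are pairwise disjoint. -/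
def IsMatchingSet {V : Type} (G : SimpleGraph V) (s : Finset (Sym2 V)) : Prop :=
  (∀ e ∈ s, e ∈ G.edgeSet) ∧
    (↑s : Set (Sym2 V)).Pairwise (fun e f => ∀ v : V, ¬ (v ∈ e ∧ v ∈ f))


lemma my_exists_leaf {V : Type} [Fintype V] (G : SimpleGraph V) (hG : G.IsAcyclic)
    (h : ∃ a b, G.Adj a b) : ∃ u v, G.Adj u v ∧ ∀ w, G.Adj u w → w = v := by
  classical
  set P : Set ℕ := {n | ∃ (a b : V) (p : G.Walk a b), p.IsPath ∧ p.length = n} with hP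
  obtain ⟨a0, b0, hab⟩ := h
  have h1 : 1 ∈ P := ⟨a0, b0, Walk.cons hab Walk.nil, by simp [hab.ne], by simp⟩
  have hbdd : BddAbove P := by
    refine ⟨Fintype.card V, fun n hn => ?_⟩
    obtain ⟨a, b, p, hp, hl⟩ := hn
    exact hl ▸ hp.length_lt.le
  have hmem : sSup P ∈ P := Nat.sSup_mem ⟨1, h1⟩ hbdd
  have hge1 : 1 ≤ sSup P := le_csSup hbdd h1
  obtain ⟨a, b, p, hp, hl⟩ := hmem
  cases p with
  | nil => simp at hl; omega
  | cons hac q =>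
    rename_i c
    refine ⟨a, c, hac, fun w hw => ?_⟩
    by_contra hwc
    rw [Walk.cons_isPath_iff] at hp
    by_cases hws : w ∈ (Walk.cons hac q).support
    · have hwa : w ≠ a := (G.ne_of_adj hw).symm
      have hwq : w ∈ q.support := by
        rcases (by simpa [Walk.support_cons] using hws : w = a ∨ w ∈ q.support) with h' | h'
        · exact absurd h' hwa
        · exact h'
      -- two distinct paths from a to w
      have p1 : G.Walk a w := Walk.cons hac (q.takeUntil w hwq)
      have hp1 : (Walk.cons hac (q.takeUntil w hwq)).IsPath := by
        rw [Walk.cons_isPath_iff]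
        exact ⟨hp.1.takeUntil hwq, fun hmem => hp.2 (Walk.support_takeUntil_subset _ hwq hmem)⟩
      have hp2 : (Walk.cons hw Walk.nil).IsPath := by simp [hw.ne]
      have := hG.path_unique ⟨Walk.cons hac (q.takeUntil w hwq), hp1⟩ ⟨Walk.cons hw Walk.nil, hp2⟩
      have hlen := congrArg (fun q : G.Path a w => q.1.length) this
      simp [Walk.length_cons] at hlen
      exact hwc hlen.symm
    · have hp' : (Walk.cons hw.symm (Walk.cons hac q)).IsPath := by
        rw [Walk.cons_isPath_iff]
        exact ⟨by rw [Walk.cons_isPath_iff]; exact hp, hws⟩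
      have : (Walk.cons hac q).length + 1 ∈ P := ⟨w, b, _, hp', by simp⟩
      have hle := le_csSup hbdd this
      omega

def eraseTwo {V : Type} (G : SimpleGraph V) (u v : V) : SimpleGraph V where
  Adj a b := G.Adj a b ∧ a ≠ u ∧ a ≠ v ∧ b ≠ u ∧ b ≠ v
  symm := ⟨fun a b ⟨h, h1, h2, h3, h4⟩ => ⟨h.symm, h3, h4, h1, h2⟩⟩
  loopless := ⟨fun a ⟨h, _, _, _, _⟩ => G.irrefl h⟩

lemma sum_split_s12 {V : Type} [Fintype V] [DecidableEq V] {M : Type} [AddCommMonoid M]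
    (u v : V) (huv : u ≠ v) (f : V → M) :
    ∑ z, f z = f u + f v + ∑ z ∈ Finset.univ \ {u, v}, f z := by
  rw [← Finset.sum_sdiff (Finset.subset_univ {u, v}), Finset.sum_pair huv]
  abel

lemma rank_eraseTwo {V : Type} [Fintype V] [DecidableEq V] {F : Type} [Field F]
    (G : SimpleGraph V) (u v : V) (huv : G.Adj u v) (huniq : ∀ w, G.Adj u w → w = v) :
    (G.adjMatrix F).rank = ((eraseTwo G u v).adjMatrix F).rank + 2 := by
  classical
  set A : Matrix V V F := G.adjMatrix F with hA
  set B : Matrix V V F := (eraseTwo G u v).adjMatrix F with hB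
  have hne : u ≠ v := huv.ne
  have hSmem : ∀ z : V, z ∈ Finset.univ \ ({u, v} : Finset V) ↔ z ≠ u ∧ z ≠ v := by
    intro z; simp
  -- entry facts
  have hAuz : ∀ z, A u z = if z = v then 1 else 0 := by
    intro z
    by_cases h : z = v
    · subst h; simp [hA, huv]
    · simp [hA, h]
      intro hadj
      exact h (huniq z hadj)
  have hAzu : ∀ z, A z u = if z = v then 1 else 0 := by
    intro z
    by_cases h : z = v
    · subst h; simp [hA, huv.symm]
    · simp [hA, h]
      intro hadj
      exact h (huniq z hadj.symm)
  have hBrow : ∀ w z, w = u ∨ w = v → B w z = 0 := by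
    rintro w z (rfl | rfl) <;>
      · simp only [hB, adjMatrix_apply, ite_eq_right_iff]
        rintro ⟨-, h1, h2, -, -⟩ <;> simp_all [eraseTwo]
  have hBcol : ∀ w z, z = u ∨ z = v → B w z = 0 := by
    rintro w z (rfl | rfl) <;>
      · simp only [hB, adjMatrix_apply, ite_eq_right_iff]
        rintro ⟨-, -, -, h1, h2⟩ <;> simp_all [eraseTwo]
  have hBA : ∀ w z, w ≠ u → w ≠ v → z ≠ u → z ≠ v → B w z = A w z := by
    intro w z h1 h2 h3 h4
    by_cases h : G.Adj w z
    · simp only [hA, hB, adjMatrix_apply]; simp [eraseTwo, h, h1, h2, h3, h4]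
    · simp only [hA, hB, adjMatrix_apply]; simp [eraseTwo, h]
  -- kernel membership characterization
  have kerA : ∀ x : V → F, x ∈ LinearMap.ker A.mulVecLin ↔ ∀ w, ∑ z, A w z * x z = 0 := by
    intro x
    rw [LinearMap.mem_ker, Matrix.mulVecLin_apply]
    constructor
    · intro h w
      have := congrFun h w
      simpa [Matrix.mulVec, dotProduct] using this
    · intro h
      funext w
      simpa [Matrix.mulVec, dotProduct] using h w
  have kerB : ∀ x : V → F, x ∈ LinearMap.ker B.mulVecLin ↔ ∀ w, ∑ z, B w z * x z = 0 := by
    intro x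
    rw [LinearMap.mem_ker, Matrix.mulVecLin_apply]
    constructor
    · intro h w
      have := congrFun h w
      simpa [Matrix.mulVec, dotProduct] using this
    · intro h
      funext w
      simpa [Matrix.mulVec, dotProduct] using h w
  -- facts about kernel of A
  have hxv : ∀ x : V → F, x ∈ LinearMap.ker A.mulVecLin → x v = 0 := by
    intro x hx
    have := (kerA x).mp hx u
    calc x v = ∑ z, A u z * x z := by
          rw [Finset.sum_eq_single v]
          · rw [hAuz]; simp
          · intro b _ hb; rw [hAuz]; simp [hb]
          · intro h; exact absurd (Finset.mem_univ v) h
      _ = 0 := this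
  have hxu : ∀ x : V → F, x ∈ LinearMap.ker A.mulVecLin →
      x u = -∑ z ∈ Finset.univ \ ({u, v} : Finset V), A v z * x z := by
    intro x hx
    have h0 := (kerA x).mp hx v
    rw [sum_split_s12 u v hne (fun z => A v z * x z)] at h0
    rw [hAzu v] at h0
    have hAvv : A v v = 0 := by simp [hA]
    rw [hAvv] at h0
    simp only [if_true, one_mul, zero_mul, add_zero] at h0
    exact eq_neg_of_add_eq_zero_left h0
  -- the maps
  set φ : (V → F) → (V → F) := fun y z =>
    if z = u then -∑ w ∈ Finset.univ \ ({u, v} : Finset V), A v w * y w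
    else if z = v then 0 else y z with hφ
  set θ : (V → F) → F → F → (V → F) := fun x a b z =>
    if z = u then a else if z = v then b else x z with hθ
  have hφu : ∀ y, φ y u = -∑ w ∈ Finset.univ \ ({u, v} : Finset V), A v w * y w := by
    intro y; simp [hφ]
  have hφv : ∀ y, φ y v = 0 := by intro y; simp [hφ, hne.symm]
  have hφS : ∀ y z, z ≠ u → z ≠ v → φ y z = y z := by
    intro y z h1 h2; simp [hφ, h1, h2]
  have hθS : ∀ x a b z, z ≠ u → z ≠ v → θ x a b z = x z := by
    intro x a b z h1 h2; simp [hθ, h1, h2]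
  have hφmem : ∀ y : V → F, y ∈ LinearMap.ker B.mulVecLin →
      φ y ∈ LinearMap.ker A.mulVecLin := by
    intro y hy
    rw [kerA]
    intro w
    rw [sum_split_s12 u v hne (fun z => A w z * φ y z)]
    have hrw : ∑ z ∈ Finset.univ \ ({u, v} : Finset V), A w z * φ y z
        = ∑ z ∈ Finset.univ \ ({u, v} : Finset V), A w z * y z := by
      refine Finset.sum_congr rfl (fun z hz => ?_)
      rw [hφS y z ((hSmem z).mp hz).1 ((hSmem z).mp hz).2]
    rw [hφu, hφv, mul_zero, add_zero, hrw]
    by_cases hwu : w = u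
    · have h1 : A w u = 0 := by rw [hwu, hAuz]; simp [hne]
      have h2 : ∑ z ∈ Finset.univ \ ({u, v} : Finset V), A w z * y z = 0 := by
        refine Finset.sum_eq_zero (fun z hz => ?_)
        rw [hwu, hAuz]; simp [((hSmem z).mp hz).2]
      rw [h1, h2]; ring
    by_cases hwv : w = v
    · have h1 : A w u = 1 := by rw [hwv, hAzu]; simp
      have h2 : ∑ z ∈ Finset.univ \ ({u, v} : Finset V), A w z * y z
          = ∑ z ∈ Finset.univ \ ({u, v} : Finset V), A v z * y z := by
        rw [hwv]
      rw [h1, h2]; ring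
    · have h1 : A w u = 0 := by rw [hAzu]; simp [hwv]
      have h2 : ∑ z ∈ Finset.univ \ ({u, v} : Finset V), A w z * y z = 0 := by
        have hBy := (kerB y).mp hy w
        rw [sum_split_s12 u v hne (fun z => B w z * y z)] at hBy
        rw [hBcol w u (Or.inl rfl), hBcol w v (Or.inr rfl)] at hBy
        simp only [zero_mul, zero_add, add_zero] at hBy
        rw [← hBy]
        refine Finset.sum_congr rfl (fun z hz => ?_)
        rw [hBA w z hwu hwv ((hSmem z).mp hz).1 ((hSmem z).mp hz).2]
      rw [h1, h2]; ring
  have hθmem : ∀ (x : V → F) (a b : F), x ∈ LinearMap.ker A.mulVecLin →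
      θ x a b ∈ LinearMap.ker B.mulVecLin := by
    intro x a b hx
    rw [kerB]
    intro w
    by_cases hwu : w = u
    · refine Finset.sum_eq_zero (fun z _ => ?_); rw [hBrow w z (Or.inl hwu)]; ring
    by_cases hwv : w = v
    · refine Finset.sum_eq_zero (fun z _ => ?_); rw [hBrow w z (Or.inr hwv)]; ring
    rw [sum_split_s12 u v hne (fun z => B w z * θ x a b z)]
    rw [hBcol w u (Or.inl rfl), hBcol w v (Or.inr rfl)]
    simp only [zero_mul, zero_add, add_zero]
    have hrw : ∑ z ∈ Finset.univ \ ({u, v} : Finset V), B w z * θ x a b z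
        = ∑ z ∈ Finset.univ \ ({u, v} : Finset V), A w z * x z := by
      refine Finset.sum_congr rfl (fun z hz => ?_)
      rw [hθS x a b z ((hSmem z).mp hz).1 ((hSmem z).mp hz).2,
        hBA w z hwu hwv ((hSmem z).mp hz).1 ((hSmem z).mp hz).2]
    rw [hrw]
    have hAx := (kerA x).mp hx w
    rw [sum_split_s12 u v hne (fun z => A w z * x z)] at hAx
    have h1 : A w u = 0 := by rw [hAzu]; simp [hwv]
    rw [h1, zero_mul, zero_add, hxv x hx, mul_zero, zero_add] at hAx
    exact hAx
  -- the linear equivalence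
  have E : (LinearMap.ker B.mulVecLin) ≃ₗ[F]
      ((LinearMap.ker A.mulVecLin) × (F × F)) :=
    { toFun := fun y => (⟨φ y.1, hφmem y.1 y.2⟩, ((y : V → F) u, (y : V → F) v))
      invFun := fun p => ⟨θ p.1.1 p.2.1 p.2.2, hθmem p.1.1 p.2.1 p.2.2 p.1.2⟩
      map_add' := by
        rintro ⟨y, hy⟩ ⟨y', hy'⟩
        ext z
        · show φ (y + y') z = φ y z + φ y' z
          simp only [hφ, Pi.add_apply]
          split_ifs
          · rw [← neg_add, ← Finset.sum_add_distrib]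
            congr 1
            refine Finset.sum_congr rfl (fun w _ => ?_)
            ring
          · ring
          · rfl
        · rfl
        · rfl
      map_smul' := by
        rintro c ⟨y, hy⟩
        ext z
        · show φ (c • y) z = c * φ y z
          simp only [hφ, Pi.smul_apply, smul_eq_mul]
          split_ifs
          · rw [mul_neg, Finset.mul_sum]
            congr 1
            refine Finset.sum_congr rfl (fun w _ => ?_)
            ring
          · ring
          · rfl
        · rfl
        · rfl
      left_inv := by
        rintro ⟨y, hy⟩
        ext z
        show θ (φ y) (y u) (y v) z = y z
        by_cases h1 : z = u
        · rw [h1]; simp [hθ]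
        by_cases h2 : z = v
        · rw [h2]; simp [hθ, hne.symm]
        · rw [hθS _ _ _ z h1 h2, hφS y z h1 h2]
      right_inv := by
        rintro ⟨⟨x, hx⟩, a, b⟩
        refine Prod.ext ?_ (Prod.ext ?_ ?_)
        · ext z
          show φ (θ x a b) z = x z
          by_cases h1 : z = u
          · rw [h1, hφu, hxu x hx]
            congr 1
            refine Finset.sum_congr rfl (fun w hw => ?_)
            rw [hθS x a b w ((hSmem w).mp hw).1 ((hSmem w).mp hw).2]
          by_cases h2 : z = v
          · rw [h2, hφv]; exact (hxv x hx).symm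
          · rw [hφS _ z h1 h2, hθS x a b z h1 h2]
        · show θ x a b u = a; simp [hθ]
        · show θ x a b v = b; simp [hθ, hne.symm] }
  -- dimension count
  have hEq := E.finrank_eq
  rw [Module.finrank_prod, Module.finrank_prod, Module.finrank_self] at hEq
  have hrnA : A.rank + Module.finrank F (LinearMap.ker A.mulVecLin) = Fintype.card V := by
    rw [Matrix.rank, LinearMap.finrank_range_add_finrank_ker,
      Module.finrank_fintype_fun_eq_card]
  have hrnB : B.rank + Module.finrank F (LinearMap.ker B.mulVecLin) = Fintype.card V := by
    rw [Matrix.rank, LinearMap.finrank_range_add_finrank_ker,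
      Module.finrank_fintype_fun_eq_card]
  omega



lemma mem_edgeSet_eraseTwo {V : Type} (G : SimpleGraph V) (u v : V) (e : Sym2 V) :
    e ∈ (eraseTwo G u v).edgeSet ↔ e ∈ G.edgeSet ∧ u ∉ e ∧ v ∉ e := by
  induction e using Sym2.ind with
  | _ a b =>
    simp only [SimpleGraph.mem_edgeSet, Sym2.mem_iff]
    show (G.Adj a b ∧ a ≠ u ∧ a ≠ v ∧ b ≠ u ∧ b ≠ v) ↔ _
    constructor
    · rintro ⟨h, h1, h2, h3, h4⟩
      refine ⟨h, ?_, ?_⟩ <;> rintro (rfl | rfl) <;> simp_all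
    · rintro ⟨h, h1, h2⟩
      push_neg at h1 h2
      exact ⟨h, (Ne.symm h1.1), (Ne.symm h2.1), (Ne.symm h1.2), (Ne.symm h2.2)⟩

lemma eraseTwo_le {V : Type} (G : SimpleGraph V) (u v : V) : eraseTwo G u v ≤ G :=
  fun _ _ h => h.1

lemma matching_insert {V : Type} [DecidableEq V] (G : SimpleGraph V) (u v : V)
    (huv : G.Adj u v) (t : Finset (Sym2 V)) (ht : IsMatchingSet (eraseTwo G u v) t) :
    IsMatchingSet G (insert s(u, v) t) ∧ s(u, v) ∉ t := by
  have hut : ∀ f ∈ t, u ∉ f ∧ v ∉ f := by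
    intro f hf
    have := (mem_edgeSet_eraseTwo G u v f).mp (ht.1 f hf)
    exact ⟨this.2.1, this.2.2⟩
  have hnt : s(u, v) ∉ t := by
    intro h
    exact (hut _ h).1 (Sym2.mem_mk_left u v)
  refine ⟨⟨?_, ?_⟩, hnt⟩
  · intro e he
    rcases Finset.mem_insert.mp he with rfl | he
    · exact huv
    · exact ((mem_edgeSet_eraseTwo G u v e).mp (ht.1 e he)).1
  · intro e he f hf hef x hx
    rw [Finset.coe_insert, Set.mem_insert_iff] at he hf
    rcases he with rfl | he <;> rcases hf with rfl | hf
    · exact hef rfl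
    · rcases Sym2.mem_iff.mp hx.1 with rfl | rfl
      · exact (hut _ hf).1 hx.2
      · exact (hut _ hf).2 hx.2
    · rcases Sym2.mem_iff.mp hx.2 with rfl | rfl
      · exact (hut _ he).1 hx.1
      · exact (hut _ he).2 hx.1
    · exact ht.2 he hf hef x hx

lemma matching_erase {V : Type} [DecidableEq V] (G : SimpleGraph V) (u v : V)
    (s : Finset (Sym2 V)) (hs : IsMatchingSet G s) (hmem : s(u, v) ∈ s) :
    IsMatchingSet (eraseTwo G u v) (s.erase s(u, v)) := by
  constructor
  · intro e he
    have he' := Finset.mem_of_mem_erase he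
    have hne := Finset.ne_of_mem_erase he
    rw [mem_edgeSet_eraseTwo]
    refine ⟨hs.1 e he', ?_, ?_⟩
    · intro hu
      exact hs.2 (Finset.mem_coe.mpr he') (Finset.mem_coe.mpr hmem) hne u
        ⟨hu, Sym2.mem_mk_left u v⟩
    · intro hv
      exact hs.2 (Finset.mem_coe.mpr he') (Finset.mem_coe.mpr hmem) hne v
        ⟨hv, Sym2.mem_mk_right u v⟩
  · intro e he f hf hef x hx
    exact hs.2 (Finset.mem_coe.mpr (Finset.mem_of_mem_erase (Finset.mem_coe.mp he)))
      (Finset.mem_coe.mpr (Finset.mem_of_mem_erase (Finset.mem_coe.mp hf))) hef x hx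

lemma exists_max_matching_with_edge {V : Type} [DecidableEq V] (G : SimpleGraph V)
    (u v : V) (huv : G.Adj u v) (huniq : ∀ w, G.Adj u w → w = v)
    (s : Finset (Sym2 V)) (hs : IsMatchingSet G s)
    (hmax : ∀ t : Finset (Sym2 V), IsMatchingSet G t → t.card ≤ s.card) :
    ∃ s' : Finset (Sym2 V), IsMatchingSet G s' ∧ s'.card = s.card ∧ s(u, v) ∈ s' := by
  by_cases hu : ∃ e ∈ s, u ∈ e
  · obtain ⟨e, he, hue⟩ := hu
    have hadj : G.Adj u (Sym2.Mem.other' hue) := by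
      have h1 := Sym2.other_spec' hue
      have h2 := hs.1 e he
      rw [← h1] at h2
      exact h2
    have hv : Sym2.Mem.other' hue = v := huniq _ hadj
    have : e = s(u, v) := by rw [← Sym2.other_spec' hue, hv]
    exact ⟨s, hs, rfl, this ▸ he⟩
  · push_neg at hu
    by_cases hv : ∃ e ∈ s, v ∈ e
    · obtain ⟨e, he, hve⟩ := hv
      have hns : s(u, v) ∉ s.erase e := fun h =>
        hu _ (Finset.mem_of_mem_erase h) (Sym2.mem_mk_left u v)
      refine ⟨insert s(u, v) (s.erase e), ⟨?_, ?_⟩, ?_, Finset.mem_insert_self _ _⟩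
      · intro f hf
        rcases Finset.mem_insert.mp hf with rfl | hf
        · exact huv
        · exact hs.1 f (Finset.mem_of_mem_erase hf)
      · intro f hf g hg hfg x hx
        rw [Finset.coe_insert, Set.mem_insert_iff] at hf hg
        have key : ∀ f' ∈ s.erase e, u ∉ f' ∧ v ∉ f' := by
          intro f' hf'
          refine ⟨fun h => hu _ (Finset.mem_of_mem_erase hf') h, fun h => ?_⟩
          exact hs.2 (Finset.mem_coe.mpr (Finset.mem_of_mem_erase hf'))
            (Finset.mem_coe.mpr he) (Finset.ne_of_mem_erase hf') v ⟨h, hve⟩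
        rcases hf with rfl | hf <;> rcases hg with rfl | hg
        · exact hfg rfl
        · rcases Sym2.mem_iff.mp hx.1 with rfl | rfl
          · exact (key _ hg).1 hx.2
          · exact (key _ hg).2 hx.2
        · rcases Sym2.mem_iff.mp hx.2 with rfl | rfl
          · exact (key _ hf).1 hx.1
          · exact (key _ hf).2 hx.1
        · exact hs.2 (Finset.mem_coe.mpr (Finset.mem_of_mem_erase hf))
            (Finset.mem_coe.mpr (Finset.mem_of_mem_erase hg)) hfg x hx
      · rw [Finset.card_insert_of_notMem hns, Finset.card_erase_of_mem he]
        have : 1 ≤ s.card := Finset.card_pos.mpr ⟨e, he⟩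
        omega
    · push_neg at hv
      exfalso
      have hns : s(u, v) ∉ s := fun h => hu _ h (Sym2.mem_mk_left u v)
      have hmatch : IsMatchingSet G (insert s(u, v) s) := by
        refine ⟨?_, ?_⟩
        · intro f hf
          rcases Finset.mem_insert.mp hf with rfl | hf
          · exact huv
          · exact hs.1 f hf
        · intro f hf g hg hfg x hx
          rw [Finset.coe_insert, Set.mem_insert_iff] at hf hg
          rcases hf with rfl | hf <;> rcases hg with rfl | hg
          · exact hfg rfl
          · rcases Sym2.mem_iff.mp hx.1 with rfl | rfl
            · exact hu _ hg hx.2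
            · exact hv _ hg hx.2
          · rcases Sym2.mem_iff.mp hx.2 with rfl | rfl
            · exact hu _ hf hx.1
            · exact hv _ hf hx.1
          · exact hs.2 hf hg hfg x hx
      have := hmax _ hmatch
      rw [Finset.card_insert_of_notMem hns] at this
      omega

theorem stmt12 {V : Type} [Fintype V] [DecidableEq V] {F : Type} [Field F]
    (G : SimpleGraph V) (hG : G.IsAcyclic) (m : ℕ)
    (hm : ∃ s : Finset (Sym2 V), IsMatchingSet G s ∧ s.card = m ∧
      ∀ t : Finset (Sym2 V), IsMatchingSet G t → t.card ≤ m) :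
    (G.adjMatrix F).rank = 2 * m := by
  classical
  suffices H : ∀ (n : ℕ) (G : SimpleGraph V), G.IsAcyclic → G.edgeSet.ncard = n →
      ∀ m : ℕ, (∃ s : Finset (Sym2 V), IsMatchingSet G s ∧ s.card = m ∧
        ∀ t : Finset (Sym2 V), IsMatchingSet G t → t.card ≤ m) →
      (G.adjMatrix F).rank = 2 * m by
    exact H G.edgeSet.ncard G hG rfl m hm
  intro n
  induction n using Nat.strong_induction_on with
  | _ n ih =>
  intro G hG hn m hm
  obtain ⟨s, hs, hcard, hmax⟩ := hm
  by_cases hE : ∃ a b, G.Adj a b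
  · obtain ⟨u, v, huv, huniq⟩ := my_exists_leaf G hG hE
    have hle := eraseTwo_le G u v
    have hG' : (eraseTwo G u v).IsAcyclic := fun a c hc => hG (c.mapLe hle) (hc.mapLe hle)
    have hsub : (eraseTwo G u v).edgeSet ⊂ G.edgeSet := by
      constructor
      · intro e he; exact ((mem_edgeSet_eraseTwo G u v e).mp he).1
      · intro hsup
        have h1 : s(u, v) ∈ G.edgeSet := huv
        have h2 := (mem_edgeSet_eraseTwo G u v s(u, v)).mp (hsup h1)
        exact h2.2.1 (Sym2.mem_mk_left u v)
    have hlt : (eraseTwo G u v).edgeSet.ncard < n := by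
      rw [← hn]
      exact Set.ncard_lt_ncard hsub (Set.toFinite _)
    have hm1 : 1 ≤ m := by
      have hmm : IsMatchingSet G {s(u, v)} := by
        constructor
        · intro e he
          rw [Finset.mem_singleton] at he
          subst he
          exact huv
        · simp [Set.pairwise_singleton]
      have := hmax _ hmm
      simpa using this
    obtain ⟨s', hs', hcard', hmem'⟩ :=
      exists_max_matching_with_edge G u v huv huniq s hs
        (fun t ht => by rw [hcard]; exact hmax t ht)
    have ht : IsMatchingSet (eraseTwo G u v) (s'.erase s(u, v)) :=
      matching_erase G u v s' hs' hmem'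
    have htcard : (s'.erase s(u, v)).card = m - 1 := by
      rw [Finset.card_erase_of_mem hmem', hcard', hcard]
    have htmax : ∀ t', IsMatchingSet (eraseTwo G u v) t' → t'.card ≤ m - 1 := by
      intro t' ht'
      obtain ⟨hins, hnm⟩ := matching_insert G u v huv t' ht'
      have := hmax _ hins
      rw [Finset.card_insert_of_notMem hnm] at this
      omega
    have hIH := ih _ hlt (eraseTwo G u v) hG' rfl (m - 1) ⟨_, ht, htcard, htmax⟩
    rw [rank_eraseTwo G u v huv huniq, hIH]
    omega
  · push_neg at hE
    have hA0 : G.adjMatrix F = 0 := by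
      ext a b
      simp [adjMatrix_apply, hE a b]
    have hES : G.edgeSet = ∅ := by
      ext e
      simp only [Set.mem_empty_iff_false, iff_false]
      induction e using Sym2.ind with
      | _ a b => exact fun h => hE a b h
    have hm0 : m = 0 := by
      rw [← hcard, Finset.card_eq_zero]
      refine Finset.eq_empty_of_forall_notMem (fun e he => ?_)
      have := hs.1 e he
      rw [hES] at this
      exact this
    rw [hA0, hm0]
    simp [Matrix.rank_zero]
end

section
/- Let F be a forest. Then B(F) := ⋃_{v ∉ Supp(A(F))} { e_v, s_v(F) } \ {0} is a basis for the column space of the adjacency matrix A(F), where s_v(F) = Σ_{w ∈ Supp(A(F)) ∩ N(v)} e_w. -/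
open SimpleGraph Matrix
open scoped Classical

/-- The supported-neighborhood vector of v:
s_v(M) = Σ_{w ∈ Supp(M) ∩ N(v)} M_{v,w} e_w. -/
noncomputable def sVec {V : Type} [Fintype V] {F : Type} [Field F]
    (G : SimpleGraph V) (M : Matrix V V F) (v : V) : V → F :=
  fun w => if w ∈ nullSupp M ∧ G.Adj v w then M v w else 0


set_option maxHeartbeats 1000000

attribute [-instance] SimpleGraph.instDecidableRelAdjDeleteEdgesOfDecidablePredSym2MemSetOfDecidableEq

section Aux

variable {V : Type} [Fintype V] [DecidableEq V] {F : Type} [Field F]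

lemma mem_nullSupp {M : Matrix V V F} {v : V} :
    v ∈ nullSupp M ↔ ∃ x : V → F, M.mulVec x = 0 ∧ x v ≠ 0 := Iff.rfl

lemma col_adjMatrix (G : SimpleGraph V) (v : V) :
    (G.adjMatrix F).mulVec (Pi.single v 1) = fun j => if G.Adj v j then 1 else 0 := by
  rw [Matrix.mulVec_single]
  funext j
  simp [G.adj_comm v j]

/-- generic: if all null vectors vanish at v, then e_v is in the range. -/
lemma single_mem_range {M : Matrix V V F} (hsym : M.IsSymm)
    (h : ∀ x : V → F, M.mulVec x = 0 → x v = 0) :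
    Pi.single v (1 : F) ∈ LinearMap.range M.mulVecLin := by
  by_contra hmem
  obtain ⟨f, hf0, hfmap⟩ :=
    Submodule.exists_dual_map_eq_bot_of_notMem hmem inferInstance
  set c : V → F := fun i => f (fun j => if i = j then (1:F) else 0) with hc
  have hker : ∀ y ∈ LinearMap.range M.mulVecLin, f y = 0 := by
    intro y hy
    have : f y ∈ (LinearMap.range M.mulVecLin).map f := ⟨y, hy, rfl⟩
    rw [hfmap] at this
    exact (Submodule.mem_bot F).mp this
  have hcol : ∀ j, ∑ i, M i j * c i = 0 := by
    intro j
    have h1 : f (M.mulVecLin (Pi.single j 1)) = 0 := hker _ ⟨_, rfl⟩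
    rw [LinearMap.pi_apply_eq_sum_univ f] at h1
    simpa [Matrix.mulVecLin_apply, Matrix.mulVec_single, smul_eq_mul, mul_comm] using h1
  have hMc : M.mulVec c = 0 := by
    funext j
    have := hcol j
    simp only [Matrix.mulVec, dotProduct, Pi.zero_apply]
    rw [← this]
    refine Finset.sum_congr rfl fun i _ => ?_
    rw [← hsym.apply i j]
  have hcv := h c hMc
  have : f (Pi.single v 1) = c v := by
    rw [hc]
    refine congrArg f (funext fun j => ?_)
    simp [Pi.single_apply, eq_comm]
  rw [this, hcv] at hf0
  exact hf0 rfl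

set_option linter.unusedSectionVars false

lemma deleteInc_adj (G : SimpleGraph V) (v : V) {a b : V} :
    (G.deleteEdges (G.incidenceSet v)).Adj a b ↔ G.Adj a b ∧ a ≠ v ∧ b ≠ v := by
  simp only [SimpleGraph.deleteEdges_adj, SimpleGraph.mk'_mem_incidenceSet_iff]
  constructor
  · rintro ⟨h1, h2⟩
    refine ⟨h1, fun h => h2 ⟨h1, Or.inl h.symm⟩, fun h => h2 ⟨h1, Or.inr h.symm⟩⟩
  · rintro ⟨h1, h2, h3⟩
    exact ⟨h1, fun h => h.2.elim (fun e => h2 e.symm) (fun e => h3 e.symm)⟩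

lemma master (G : SimpleGraph V) (v : V) (y : V → F) :
    (G.adjMatrix F).mulVec y =
      ((G.deleteEdges (G.incidenceSet v)).adjMatrix F).mulVec y
      + Pi.single v (∑ x ∈ G.neighborFinset v, y x)
      + (y v) • fun w => if G.Adj v w then (1:F) else 0 := by
  funext j
  simp only [Pi.add_apply, Pi.smul_apply, smul_eq_mul, SimpleGraph.adjMatrix_mulVec_apply,
    Pi.single_apply]
  by_cases hj : j = v
  · subst hj
    have h1 : (G.deleteEdges (G.incidenceSet j)).neighborFinset j = ∅ := by
      ext x; simp [SimpleGraph.mem_neighborFinset, deleteInc_adj]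
    rw [h1]
    simp [G.irrefl]
  · by_cases hadj : G.Adj j v
    · have h1 : (G.deleteEdges (G.incidenceSet v)).neighborFinset j
          = (G.neighborFinset j).erase v := by
        ext x
        simp only [SimpleGraph.mem_neighborFinset, deleteInc_adj, Finset.mem_erase]
        constructor
        · rintro ⟨h1, _, h3⟩; exact ⟨h3, h1⟩
        · rintro ⟨h1, h2⟩; exact ⟨h2, hj, h1⟩
      rw [h1, if_neg hj, if_pos hadj.symm]
      have := Finset.sum_erase_add (G.neighborFinset j) y
        (by rw [SimpleGraph.mem_neighborFinset]; exact hadj)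
      rw [← this]
      ring
    · have h1 : (G.deleteEdges (G.incidenceSet v)).neighborFinset j
          = G.neighborFinset j := by
        ext x
        simp only [SimpleGraph.mem_neighborFinset, deleteInc_adj]
        constructor
        · rintro ⟨h1, _, _⟩; exact h1
        · intro h1
          refine ⟨h1, hj, fun hx => ?_⟩
          subst hx; exact hadj h1
      rw [h1, if_neg hj, if_neg (fun h => hadj h.symm)]
      ring

section LeafLemmas

variable {G : SimpleGraph V} {u v : V}

lemma neighborFinset_leaf (huv : G.Adj u v) (hleaf : ∀ w, G.Adj u w → w = v) :
    G.neighborFinset u = {v} := by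
  ext w
  simp only [SimpleGraph.mem_neighborFinset, Finset.mem_singleton]
  exact ⟨fun h => hleaf w h, fun h => h ▸ huv⟩

lemma col_leaf (huv : G.Adj u v) (hleaf : ∀ w, G.Adj u w → w = v) :
    (G.adjMatrix F).mulVec ((Pi.single u 1 : V → F)) = (Pi.single v 1 : V → F) := by
  rw [col_adjMatrix]
  funext j
  rw [Pi.single_apply]
  by_cases h : G.Adj u j
  · rw [if_pos h, if_pos (hleaf j h)]
  · rw [if_neg h, if_neg (fun e : j = v => h (e ▸ huv))]

lemma xv_eq_zero (huv : G.Adj u v) (hleaf : ∀ w, G.Adj u w → w = v)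
    {x : V → F} (hx : (G.adjMatrix F).mulVec x = 0) : x v = 0 := by
  have h := congrFun hx u
  rw [SimpleGraph.adjMatrix_mulVec_apply, neighborFinset_leaf huv hleaf] at h
  simpa using h

lemma v_not_mem_nullSupp (huv : G.Adj u v) (hleaf : ∀ w, G.Adj u w → w = v) :
    v ∉ nullSupp (G.adjMatrix F) := by
  rintro ⟨x, hx, hxv⟩
  exact hxv (xv_eq_zero huv hleaf hx)

lemma rv_eq_zero {x : V → F} (hx : (G.adjMatrix F).mulVec x = 0) :
    ∑ w ∈ G.neighborFinset v, x w = 0 := by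
  have h := congrFun hx v
  rwa [SimpleGraph.adjMatrix_mulVec_apply] at h

lemma col'_u_zero (huv : G.Adj u v) (hleaf : ∀ w, G.Adj u w → w = v) :
    ((G.deleteEdges (G.incidenceSet v)).adjMatrix F).mulVec ((Pi.single u 1 : V → F)) = 0 := by
  rw [Matrix.mulVec_single_one]
  funext j
  simp only [Matrix.col_apply, SimpleGraph.adjMatrix_apply, Pi.zero_apply, mul_one]
  rw [if_neg]
  rw [deleteInc_adj]
  rintro ⟨h1, h2, h3⟩
  exact h2 (hleaf j h1.symm)

lemma col'_v_zero :
    ((G.deleteEdges (G.incidenceSet v)).adjMatrix F).mulVec ((Pi.single v 1 : V → F)) = 0 := by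
  rw [Matrix.mulVec_single_one]
  funext j
  simp only [Matrix.col_apply, SimpleGraph.adjMatrix_apply, Pi.zero_apply, mul_one]
  rw [if_neg]
  rw [deleteInc_adj]
  rintro ⟨h1, h2, h3⟩
  exact h3 rfl

lemma ker_to_ker' (huv : G.Adj u v) (hleaf : ∀ w, G.Adj u w → w = v)
    {x : V → F} (hx : (G.adjMatrix F).mulVec x = 0) :
    ((G.deleteEdges (G.incidenceSet v)).adjMatrix F).mulVec (x - x u • (Pi.single u 1 : V → F)) = 0 := by
  have hxv : x v = 0 := xv_eq_zero huv hleaf hx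
  have hm := master G v x
  rw [hx, rv_eq_zero hx, hxv] at hm
  have hA'x : ((G.deleteEdges (G.incidenceSet v)).adjMatrix F).mulVec x = 0 := by
    have := hm.symm
    simpa using this
  have : ((G.deleteEdges (G.incidenceSet v)).adjMatrix F).mulVec (x - x u • (Pi.single u 1 : V → F))
      = ((G.deleteEdges (G.incidenceSet v)).adjMatrix F).mulVec x
        - x u • ((G.deleteEdges (G.incidenceSet v)).adjMatrix F).mulVec ((Pi.single u 1 : V → F)) := by
    rw [Matrix.mulVec_sub, Matrix.mulVec_smul]
  rw [this, hA'x, col'_u_zero huv hleaf]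
  simp

lemma ker'_to_ker (huv : G.Adj u v) (hleaf : ∀ w, G.Adj u w → w = v)
    {y : V → F} (hy : ((G.deleteEdges (G.incidenceSet v)).adjMatrix F).mulVec y = 0)
    (hyv : y v = 0) :
    (G.adjMatrix F).mulVec
      (y - (∑ w ∈ G.neighborFinset v, y w) • (Pi.single u 1 : V → F)) = 0 := by
  have hm := master G v y
  rw [hy, hyv] at hm
  have hAy : (G.adjMatrix F).mulVec y = Pi.single v (∑ w ∈ G.neighborFinset v, y w) := by
    rw [hm]; simp
  have hsub : (G.adjMatrix F).mulVec (y - (∑ w ∈ G.neighborFinset v, y w) • (Pi.single u 1 : V → F))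
      = (G.adjMatrix F).mulVec y
        - (∑ w ∈ G.neighborFinset v, y w) • (G.adjMatrix F).mulVec ((Pi.single u 1 : V → F)) := by
    rw [Matrix.mulVec_sub, Matrix.mulVec_smul]
  rw [hsub, hAy, col_leaf huv hleaf]
  funext j
  simp [Pi.single_apply, mul_comm]

lemma u_mem_nullSupp' (huv : G.Adj u v) (hleaf : ∀ w, G.Adj u w → w = v) :
    u ∈ nullSupp ((G.deleteEdges (G.incidenceSet v)).adjMatrix F) :=
  ⟨(Pi.single u 1 : V → F), col'_u_zero huv hleaf, by simp⟩

lemma v_mem_nullSupp' :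
    v ∈ nullSupp ((G.deleteEdges (G.incidenceSet v)).adjMatrix F) :=
  ⟨(Pi.single v 1 : V → F), col'_v_zero, by simp⟩

lemma mem_nullSupp'_of_mem (huv : G.Adj u v) (hleaf : ∀ w, G.Adj u w → w = v)
    {w : V} (hw : w ∈ nullSupp (G.adjMatrix F)) (hwu : w ≠ u) :
    w ∈ nullSupp ((G.deleteEdges (G.incidenceSet v)).adjMatrix F) := by
  obtain ⟨x, hx, hxw⟩ := hw
  refine ⟨x - x u • (Pi.single u 1 : V → F), ker_to_ker' huv hleaf hx, ?_⟩
  simpa [Pi.single_apply, hwu] using hxw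

lemma mem_of_mem_nullSupp' (huv : G.Adj u v) (hleaf : ∀ w, G.Adj u w → w = v)
    {w : V} (hw : w ∈ nullSupp ((G.deleteEdges (G.incidenceSet v)).adjMatrix F))
    (hwu : w ≠ u) (hwv : w ≠ v) :
    w ∈ nullSupp (G.adjMatrix F) := by
  obtain ⟨x, hx, hxw⟩ := hw
  set y : V → F := x - x u • (Pi.single u 1 : V → F) - x v • (Pi.single v 1 : V → F) with hy
  have hky : ((G.deleteEdges (G.incidenceSet v)).adjMatrix F).mulVec y = 0 := by
    rw [hy]
    rw [Matrix.mulVec_sub, Matrix.mulVec_sub, Matrix.mulVec_smul, Matrix.mulVec_smul,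
      hx, col'_u_zero huv hleaf, col'_v_zero]
    simp
  have hne : v ≠ u := fun h => huv.ne h.symm
  have hyv : y v = 0 := by simp [hy, Pi.single_apply, hne]
  refine ⟨y - (∑ w ∈ G.neighborFinset v, y w) • (Pi.single u 1 : V → F),
    ker'_to_ker huv hleaf hky hyv, ?_⟩
  simp [hy, Pi.single_apply, hwu, hwv, hxw, hne]

lemma twin_leaf (huv : G.Adj u v) (hleaf : ∀ w, G.Adj u w → w = v)
    {l : V} (hlv : G.Adj l v) (hleafl : ∀ w, G.Adj l w → w = v) (hul : u ≠ l) :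
    u ∈ nullSupp (G.adjMatrix F) := by
  refine ⟨(Pi.single u 1 : V → F) - (Pi.single l 1 : V → F), ?_, by simp [Pi.single_apply, hul]⟩
  rw [Matrix.mulVec_sub, col_leaf huv hleaf, col_leaf hlv hleafl, sub_self]

lemma two_nbrs (huv : G.Adj u v) {z : V}
    (hNv : ∀ w, G.Adj v w → w = u ∨ w = z) (hzv : G.Adj v z)
    (hz : z ∈ nullSupp (G.adjMatrix F)) (hzu : z ≠ u) :
    u ∈ nullSupp (G.adjMatrix F) := by
  obtain ⟨x, hx, hxz⟩ := hz
  have hNfin : G.neighborFinset v = {u, z} := by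
    ext w
    simp only [SimpleGraph.mem_neighborFinset, Finset.mem_insert, Finset.mem_singleton]
    constructor
    · exact hNv w
    · rintro (rfl | rfl)
      · exact huv.symm
      · exact hzv
  have h0 : ∑ w ∈ G.neighborFinset v, x w = 0 := rv_eq_zero hx
  rw [hNfin, Finset.sum_insert (by simp [Ne.symm hzu]), Finset.sum_singleton] at h0
  refine ⟨x, hx, ?_⟩
  intro hxu
  rw [hxu, zero_add] at h0
  exact hxz h0

end LeafLemmas

section LongestPath

variable {G : SimpleGraph V}

lemma exists_max_path (hadj : ∃ x y, G.Adj x y) :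
    ∃ (a b : V) (p : G.Walk a b), p.IsPath ∧ 1 ≤ p.length ∧
      ∀ (c d : V) (q : G.Walk c d), q.IsPath → q.length ≤ p.length := by
  obtain ⟨x, y, hxy⟩ := hadj
  set Ls : Set ℕ := {n | ∃ (a b : V) (p : G.Walk a b), p.IsPath ∧ p.length = n} with hLs
  have hbdd : BddAbove Ls := by
    refine ⟨Fintype.card V, ?_⟩
    rintro n ⟨a, b, p, hp, rfl⟩
    exact hp.length_lt.le
  have h1 : 1 ∈ Ls := by
    refine ⟨x, y, SimpleGraph.Walk.cons hxy SimpleGraph.Walk.nil, ?_, rfl⟩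
    simp [SimpleGraph.Walk.cons_isPath_iff, hxy.ne]
  have hmem := Nat.sSup_mem ⟨1, h1⟩ hbdd
  obtain ⟨a, b, p, hp, hlen⟩ := hmem
  refine ⟨a, b, p, hp, ?_, fun c d q hq => ?_⟩
  · rw [hlen]; exact le_csSup hbdd h1
  · rw [hlen]; exact le_csSup hbdd ⟨c, d, q, hq, rfl⟩

lemma endpoint_leaf (hG : G.IsAcyclic) {a v b : V} (hav : G.Adj a v) (q : G.Walk v b)
    (hp : (SimpleGraph.Walk.cons hav q).IsPath)
    (hmax : ∀ (c d : V) (w : G.Walk c d), w.IsPath →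
      w.length ≤ (SimpleGraph.Walk.cons hav q).length) :
    ∀ y, G.Adj a y → y = v := by
  intro y hay
  by_contra hyv
  by_cases hys : y ∈ (SimpleGraph.Walk.cons hav q).support
  · have hya : y ≠ a := fun h => hay.ne' h
    have hval : SimpleGraph.Walk.cons hay SimpleGraph.Walk.nil
        = (SimpleGraph.Walk.cons hav q).takeUntil y hys :=
      congrArg Subtype.val (hG.path_unique
        ⟨SimpleGraph.Walk.cons hay SimpleGraph.Walk.nil,
          by simp [SimpleGraph.Walk.cons_isPath_iff, hay.ne]⟩
        ⟨(SimpleGraph.Walk.cons hav q).takeUntil y hys, hp.takeUntil hys⟩)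
    have hsp := (SimpleGraph.Walk.cons hav q).take_spec hys
    rw [← hval] at hsp
    have h1 : (SimpleGraph.Walk.cons hav q).getVert 1 = v := by
      rw [SimpleGraph.Walk.getVert_cons_succ, SimpleGraph.Walk.getVert_zero]
    have h2 : (SimpleGraph.Walk.cons hav q).getVert 1 = y := by
      rw [← hsp]
      show ((SimpleGraph.Walk.cons hay SimpleGraph.Walk.nil).append _).getVert 1 = y
      rw [SimpleGraph.Walk.cons_append, SimpleGraph.Walk.nil_append,
        SimpleGraph.Walk.getVert_cons_succ, SimpleGraph.Walk.getVert_zero]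
    exact hyv (h2 ▸ h1)
  · have hnew : (SimpleGraph.Walk.cons hay.symm (SimpleGraph.Walk.cons hav q)).IsPath :=
      hp.cons hys
    have := hmax _ _ _ hnew
    simp [SimpleGraph.Walk.length_cons] at this

lemma second_unique (hG : G.IsAcyclic) {v b : V} (q : G.Walk v b) (hq : q.IsPath)
    {y : V} (hvy : G.Adj v y) (hyq : y ∈ q.support) : y = q.getVert 1 := by
  have hval : q.takeUntil y hyq = SimpleGraph.Walk.cons hvy SimpleGraph.Walk.nil :=
    congrArg Subtype.val (hG.path_unique
      ⟨q.takeUntil y hyq, hq.takeUntil hyq⟩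
      ⟨SimpleGraph.Walk.cons hvy SimpleGraph.Walk.nil,
        by simp [SimpleGraph.Walk.cons_isPath_iff, hvy.ne]⟩)
  have hsp := q.take_spec hyq
  rw [hval] at hsp
  rw [← hsp]
  show y = ((SimpleGraph.Walk.cons hvy SimpleGraph.Walk.nil).append _).getVert 1
  rw [SimpleGraph.Walk.cons_append, SimpleGraph.Walk.nil_append,
    SimpleGraph.Walk.getVert_cons_succ, SimpleGraph.Walk.getVert_zero]

lemma nonleaf_in_support (hG : G.IsAcyclic) {a v b : V} (hav : G.Adj a v) (q : G.Walk v b)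
    (hp : (SimpleGraph.Walk.cons hav q).IsPath)
    (hmax : ∀ (c d : V) (w : G.Walk c d), w.IsPath →
      w.length ≤ (SimpleGraph.Walk.cons hav q).length)
    {y : V} (hvy : G.Adj v y) (hya : y ≠ a) {z : V} (hyz : G.Adj y z) (hzv : z ≠ v) :
    y ∈ q.support := by
  have hq : q.IsPath := ((SimpleGraph.Walk.cons_isPath_iff hav q).mp hp).1
  by_contra hyq
  have hw2 : (SimpleGraph.Walk.cons hvy.symm q).IsPath := hq.cons hyq
  by_cases hzq : z ∈ q.support
  · have hval : SimpleGraph.Walk.cons hyz.symm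
        (SimpleGraph.Walk.cons hvy.symm SimpleGraph.Walk.nil)
        = (q.takeUntil z hzq).reverse :=
      congrArg Subtype.val (hG.path_unique
        ⟨SimpleGraph.Walk.cons hyz.symm
          (SimpleGraph.Walk.cons hvy.symm SimpleGraph.Walk.nil), by
            simp [SimpleGraph.Walk.cons_isPath_iff, hyz.ne', hvy.ne', hzv]⟩
        ⟨(q.takeUntil z hzq).reverse, (hq.takeUntil hzq).reverse⟩)
    have hy1 : y ∈ ((q.takeUntil z hzq).reverse).support := by
      rw [← hval]
      simp [SimpleGraph.Walk.support_cons]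
    have : y ∈ (q.takeUntil z hzq).support := by
      rw [SimpleGraph.Walk.support_reverse] at hy1
      simpa using hy1
    exact hyq (q.support_takeUntil_subset hzq this)
  · have hz2 : z ∉ (SimpleGraph.Walk.cons hvy.symm q).support := by
      rw [SimpleGraph.Walk.support_cons]
      intro hmem
      rcases List.mem_cons.mp hmem with h | h
      · exact hyz.ne' h
      · exact hzq h
    have hnew : (SimpleGraph.Walk.cons hyz.symm
        (SimpleGraph.Walk.cons hvy.symm q)).IsPath := hw2.cons hz2
    have := hmax _ _ _ hnew
    simp [SimpleGraph.Walk.length_cons] at this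

lemma leaf_choice (hG : G.IsAcyclic) (hadj : ∃ x y, G.Adj x y) :
    ∃ u v, G.Adj u v ∧ (∀ w, G.Adj u w → w = v) ∧
      (u ∈ nullSupp (G.adjMatrix F) ∨
        ∀ z, G.Adj v z → z ∉ nullSupp (G.adjMatrix F)) := by
  obtain ⟨a, b, p, hp, hlen, hmax⟩ := exists_max_path hadj
  cases p with
  | nil => simp at hlen
  | cons hav q =>
    rename_i v
    have hleaf := endpoint_leaf hG hav q hp hmax
    refine ⟨a, v, hav, hleaf, ?_⟩
    by_cases hu : a ∈ nullSupp (G.adjMatrix F)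
    · exact Or.inl hu
    · right
      intro z hvz hzS
      have hq : q.IsPath := ((SimpleGraph.Walk.cons_isPath_iff hav q).mp hp).1
      by_cases hza : z = a
      · exact hu (hza ▸ hzS)
      · by_cases hl : ∃ l, G.Adj v l ∧ l ≠ a ∧ ∀ w, G.Adj l w → w = v
        · obtain ⟨l, h1, h2, h3⟩ := hl
          exact hu (twin_leaf hav hleaf h1.symm h3 (Ne.symm h2))
        · push_neg at hl
          have hsub : ∀ y, G.Adj v y → y = a ∨ y = z := by
            intro y hvy
            by_contra hcon
            push_neg at hcon
            obtain ⟨hya, hyz⟩ := hcon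
            obtain ⟨wy, hwy1, hwy2⟩ := hl y hvy hya
            obtain ⟨wz, hwz1, hwz2⟩ := hl z hvz hza
            have h1 := nonleaf_in_support hG hav q hp hmax hvy hya hwy1 hwy2
            have h2 := nonleaf_in_support hG hav q hp hmax hvz hza hwz1 hwz2
            have e1 := second_unique hG q hq hvy h1
            have e2 := second_unique hG q hq hvz h2
            exact hyz (e1.trans e2.symm)
          exact hu (two_nbrs hav hsub hvz hzS hza)

end LongestPath

lemma single_ne_zero' (w : V) : (Pi.single w 1 : V → F) ≠ 0 := by
  intro h
  have := congrFun h w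
  simp at this

lemma colDecomp (G : SimpleGraph V) (w : V) :
    (G.adjMatrix F).mulVec (Pi.single w 1 : V → F) = sVec G (G.adjMatrix F) w +
      ∑ x ∈ Finset.univ.filter
        (fun x => G.Adj w x ∧ x ∉ nullSupp (G.adjMatrix F)),
        (Pi.single x 1 : V → F) := by
  rw [col_adjMatrix]
  funext j
  simp only [Pi.add_apply, Finset.sum_apply, sVec]
  have hsum : ∑ x ∈ Finset.univ.filter
      (fun x => G.Adj w x ∧ x ∉ nullSupp (G.adjMatrix F)), (Pi.single x 1 : V → F) j
      = if G.Adj w j ∧ j ∉ nullSupp (G.adjMatrix F) then 1 else 0 := by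
    rw [Finset.sum_congr rfl (fun x _ => Pi.single_apply x (1:F) j)]
    rw [Finset.sum_ite_eq (Finset.univ.filter
      (fun x => G.Adj w x ∧ x ∉ nullSupp (G.adjMatrix F))) j (fun _ => (1:F))]
    simp [Finset.mem_filter]
  rw [hsum]
  by_cases h1 : G.Adj w j
  · by_cases h2 : j ∈ nullSupp (G.adjMatrix F)
    · simp [h1, h2]
    · simp [h1, h2]
  · simp [h1]

/-- The candidate basis set. -/
noncomputable def BSet (F : Type) [Field F] {V : Type} [Fintype V] [DecidableEq V]
    (G : SimpleGraph V) : Set (V → F) :=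
  (⋃ v ∈ {v : V | v ∉ nullSupp (G.adjMatrix F)},
    {Pi.single v (1 : F), sVec G (G.adjMatrix F) v}) \ {0}

lemma mem_BSet {G : SimpleGraph V} {x : V → F} :
    x ∈ BSet F G ↔
      (∃ w, w ∉ nullSupp (G.adjMatrix F) ∧
        (x = Pi.single w 1 ∨ x = sVec G (G.adjMatrix F) w)) ∧ x ≠ 0 := by
  simp only [BSet, Set.mem_diff, Set.mem_iUnion, Set.mem_setOf_eq, Set.mem_insert_iff,
    Set.mem_singleton_iff]
  constructor
  · rintro ⟨⟨w, hw, h⟩, h0⟩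
    exact ⟨⟨w, hw, h⟩, h0⟩
  · rintro ⟨⟨w, hw, h⟩, h0⟩
    exact ⟨⟨w, hw, h⟩, h0⟩

section StepLemmas

variable {G : SimpleGraph V} {u v : V}

lemma sVec_agree (huv : G.Adj u v) (hleaf : ∀ w, G.Adj u w → w = v)
    {w : V} (hwu : w ≠ u) (hwv : w ≠ v) :
    sVec G (G.adjMatrix F) w
      = sVec (G.deleteEdges (G.incidenceSet v))
          ((G.deleteEdges (G.incidenceSet v)).adjMatrix F) w := by
  funext j
  show (if j ∈ nullSupp (G.adjMatrix F) ∧ G.Adj w j then G.adjMatrix F w j else 0) = _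
  by_cases hj : j = u
  · subst hj
    rw [if_neg (fun hc => hwv (hleaf w hc.2.symm))]
    rw [sVec, if_neg (fun hc => hwv (hleaf w ((deleteInc_adj G v).mp hc.2).1.symm))]
  · by_cases hjv : j = v
    · rw [if_neg (fun hc => v_not_mem_nullSupp huv hleaf (hjv ▸ hc.1))]
      rw [sVec, if_neg (fun hc => ((deleteInc_adj G v).mp hc.2).2.2 hjv)]
    · by_cases hc : j ∈ nullSupp (G.adjMatrix F) ∧ G.Adj w j
      · have hc' : j ∈ nullSupp ((G.deleteEdges (G.incidenceSet v)).adjMatrix F)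
            ∧ (G.deleteEdges (G.incidenceSet v)).Adj w j :=
          ⟨mem_nullSupp'_of_mem huv hleaf hc.1 hj,
            (deleteInc_adj G v).mpr ⟨hc.2, hwv, hjv⟩⟩
        rw [if_pos hc, sVec, if_pos hc', SimpleGraph.adjMatrix_apply,
          SimpleGraph.adjMatrix_apply, if_pos hc.2, if_pos hc'.2]
      · have hc' : ¬(j ∈ nullSupp ((G.deleteEdges (G.incidenceSet v)).adjMatrix F)
            ∧ (G.deleteEdges (G.incidenceSet v)).Adj w j) :=
          fun h => hc ⟨mem_of_mem_nullSupp' huv hleaf h.1 hj hjv,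
            ((deleteInc_adj G v).mp h.2).1⟩
        rw [if_neg hc, sVec, if_neg hc']

lemma sVec_zero_of_no_supp_nbr {w : V}
    (h : ∀ z, G.Adj w z → z ∉ nullSupp (G.adjMatrix F)) :
    sVec G (G.adjMatrix F) w = 0 := by
  funext j
  rw [sVec, if_neg (fun hc => h j hc.2 hc.1)]
  rfl

lemma sVec_u_zero (huv : G.Adj u v) (hleaf : ∀ w, G.Adj u w → w = v) :
    sVec G (G.adjMatrix F) u = 0 :=
  sVec_zero_of_no_supp_nbr (fun z hz =>
    (hleaf z hz) ▸ v_not_mem_nullSupp huv hleaf)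

lemma sVec_v_at_u (huv : G.Adj u v) (hu : u ∈ nullSupp (G.adjMatrix F)) :
    sVec G (G.adjMatrix F) v u = 1 := by
  rw [sVec, if_pos ⟨hu, huv.symm⟩, SimpleGraph.adjMatrix_apply, if_pos huv.symm]

lemma sVec_v_ne_zero (huv : G.Adj u v) (hu : u ∈ nullSupp (G.adjMatrix F)) :
    sVec G (G.adjMatrix F) v ≠ 0 := by
  intro h
  have := congrFun h u
  rw [sVec_v_at_u huv hu] at this
  simp at this

lemma BSet_vanish (huv : G.Adj u v) (hleaf : ∀ w, G.Adj u w → w = v) :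
    ∀ x ∈ BSet F (G.deleteEdges (G.incidenceSet v)), x u = 0 ∧ x v = 0 := by
  intro x hx
  rw [mem_BSet] at hx
  obtain ⟨⟨w, hw, hxe⟩, _⟩ := hx
  have hwu : w ≠ u := fun h => hw (h ▸ u_mem_nullSupp' huv hleaf)
  have hwv : w ≠ v := fun h => hw (h ▸ v_mem_nullSupp')
  rcases hxe with rfl | rfl
  · constructor <;> rw [Pi.single_apply] <;> simp [Ne.symm hwu, Ne.symm hwv]
  · constructor
    · rw [sVec, if_neg]
      rintro ⟨_, hadj⟩
      exact hwv (hleaf w (((deleteInc_adj G v).mp hadj).1).symm)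
    · rw [sVec, if_neg]
      rintro ⟨_, hadj⟩
      exact ((deleteInc_adj G v).mp hadj).2.2 rfl

end StepLemmas

section CaseLemmas

variable {G : SimpleGraph V} {u v : V}

lemma BSet_eq_caseI (huv : G.Adj u v) (hleaf : ∀ w, G.Adj u w → w = v)
    (hu : u ∈ nullSupp (G.adjMatrix F)) :
    BSet F G = insert (Pi.single v 1 : V → F)
      (insert (sVec G (G.adjMatrix F) v)
        (BSet F (G.deleteEdges (G.incidenceSet v)))) := by
  have haS := v_not_mem_nullSupp (F := F) huv hleaf
  ext x
  rw [mem_BSet]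
  simp only [Set.mem_insert_iff]
  constructor
  · rintro ⟨⟨w, hw, hxe⟩, h0⟩
    by_cases hwv : w = v
    · subst hwv
      rcases hxe with rfl | rfl
      · exact Or.inl rfl
      · exact Or.inr (Or.inl rfl)
    · have hwu : w ≠ u := fun h => hw (h ▸ hu)
      have hw' : w ∉ nullSupp ((G.deleteEdges (G.incidenceSet v)).adjMatrix F) :=
        fun h => hw (mem_of_mem_nullSupp' huv hleaf h hwu hwv)
      refine Or.inr (Or.inr ?_)
      rw [mem_BSet]
      refine ⟨⟨w, hw', ?_⟩, h0⟩
      rcases hxe with rfl | rfl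
      · exact Or.inl rfl
      · exact Or.inr (sVec_agree huv hleaf hwu hwv)
  · rintro (rfl | rfl | hx)
    · exact ⟨⟨v, haS, Or.inl rfl⟩, single_ne_zero' v⟩
    · exact ⟨⟨v, haS, Or.inr rfl⟩, sVec_v_ne_zero huv hu⟩
    · rw [mem_BSet] at hx
      obtain ⟨⟨w, hw', hxe⟩, h0⟩ := hx
      have hwu : w ≠ u := fun h => hw' (h ▸ u_mem_nullSupp' huv hleaf)
      have hwv : w ≠ v := fun h => hw' (h ▸ v_mem_nullSupp')
      have hw : w ∉ nullSupp (G.adjMatrix F) :=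
        fun h => hw' (mem_nullSupp'_of_mem huv hleaf h hwu)
      refine ⟨⟨w, hw, ?_⟩, h0⟩
      rcases hxe with rfl | rfl
      · exact Or.inl rfl
      · exact Or.inr (sVec_agree huv hleaf hwu hwv).symm

lemma BSet_eq_caseII (huv : G.Adj u v) (hleaf : ∀ w, G.Adj u w → w = v)
    (hu : u ∉ nullSupp (G.adjMatrix F))
    (hdisj : ∀ z, G.Adj v z → z ∉ nullSupp (G.adjMatrix F)) :
    BSet F G = insert (Pi.single u 1 : V → F)
      (insert (Pi.single v 1 : V → F)
        (BSet F (G.deleteEdges (G.incidenceSet v)))) := by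
  have haS := v_not_mem_nullSupp (F := F) huv hleaf
  ext x
  rw [mem_BSet]
  simp only [Set.mem_insert_iff]
  constructor
  · rintro ⟨⟨w, hw, hxe⟩, h0⟩
    by_cases hwu : w = u
    · subst hwu
      rcases hxe with rfl | rfl
      · exact Or.inl rfl
      · exact absurd (sVec_u_zero huv hleaf) h0
    · by_cases hwv : w = v
      · subst hwv
        rcases hxe with rfl | rfl
        · exact Or.inr (Or.inl rfl)
        · exact absurd (sVec_zero_of_no_supp_nbr hdisj) h0
      · have hw' : w ∉ nullSupp ((G.deleteEdges (G.incidenceSet v)).adjMatrix F) :=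
          fun h => hw (mem_of_mem_nullSupp' huv hleaf h hwu hwv)
        refine Or.inr (Or.inr ?_)
        rw [mem_BSet]
        refine ⟨⟨w, hw', ?_⟩, h0⟩
        rcases hxe with rfl | rfl
        · exact Or.inl rfl
        · exact Or.inr (sVec_agree huv hleaf hwu hwv)
  · rintro (rfl | rfl | hx)
    · exact ⟨⟨u, hu, Or.inl rfl⟩, single_ne_zero' u⟩
    · exact ⟨⟨v, haS, Or.inl rfl⟩, single_ne_zero' v⟩
    · rw [mem_BSet] at hx
      obtain ⟨⟨w, hw', hxe⟩, h0⟩ := hx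
      have hwu : w ≠ u := fun h => hw' (h ▸ u_mem_nullSupp' huv hleaf)
      have hwv : w ≠ v := fun h => hw' (h ▸ v_mem_nullSupp')
      have hw : w ∉ nullSupp (G.adjMatrix F) :=
        fun h => hw' (mem_nullSupp'_of_mem huv hleaf h hwu)
      refine ⟨⟨w, hw, ?_⟩, h0⟩
      rcases hxe with rfl | rfl
      · exact Or.inl rfl
      · exact Or.inr (sVec_agree huv hleaf hwu hwv).symm

end CaseLemmas

lemma bot_case {G : SimpleGraph V} (hnoadj : ∀ x y, ¬ G.Adj x y) :
    (∀ x y, x ∈ nullSupp (G.adjMatrix F) →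
      y ∈ nullSupp (G.adjMatrix F) → ¬G.Adj x y) ∧
    LinearIndependent F (fun b : (BSet F G) => (b : V → F)) := by
  constructor
  · intro x y _ _ h
    exact hnoadj x y h
  · have hall : ∀ w : V, w ∈ nullSupp (G.adjMatrix F) := by
      intro w
      refine ⟨Pi.single w 1, ?_, by simp⟩
      funext j
      simp [Matrix.mulVec, dotProduct, SimpleGraph.adjMatrix_apply, hnoadj]
    have hempty : BSet F G = ∅ := by
      ext x
      rw [mem_BSet]
      simp only [Set.mem_empty_iff_false, iff_false]
      rintro ⟨⟨w, hw, _⟩, _⟩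
      exact hw (hall w)
    rw [hempty]
    exact linearIndependent_empty F (V → F)

lemma main_aux (n : ℕ) : ∀ (G : SimpleGraph V), G.IsAcyclic → G.edgeSet.ncard ≤ n →
    (∀ x y, x ∈ nullSupp (G.adjMatrix F) → y ∈ nullSupp (G.adjMatrix F) → ¬G.Adj x y) ∧
    LinearIndependent F (fun b : (BSet F G) => (b : V → F)) := by
  induction n with
  | zero =>
    intro G hG hcard
    have hE : G.edgeSet = ∅ :=
      (Set.ncard_eq_zero (Set.toFinite _)).mp (Nat.le_zero.mp hcard)
    refine bot_case fun x y hxy => ?_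
    have hmem : s(x,y) ∈ G.edgeSet := hxy
    rw [hE] at hmem
    exact hmem
  | succ n ih =>
    intro G hG hcard
    by_cases hadj : ∃ x y, G.Adj x y
    case neg =>
      push_neg at hadj
      exact bot_case hadj
    case pos =>
      obtain ⟨u, v, huv, hleaf, hdisj⟩ := leaf_choice (F := F) hG hadj
      have hle : G.deleteEdges (G.incidenceSet v) ≤ G := SimpleGraph.deleteEdges_le _
      have hG' : (G.deleteEdges (G.incidenceSet v)).IsAcyclic :=
        fun a c hc => hG (c.mapLe hle) ((SimpleGraph.Walk.mapLe_isCycle hle).mpr hc)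
      have hsubE : (G.deleteEdges (G.incidenceSet v)).edgeSet ⊆ G.edgeSet := by
        rw [SimpleGraph.edgeSet_deleteEdges]
        exact Set.diff_subset
      have hnotin : s(u,v) ∉ (G.deleteEdges (G.incidenceSet v)).edgeSet := by
        rw [SimpleGraph.edgeSet_deleteEdges]
        rintro ⟨_, h2⟩
        exact h2 ((SimpleGraph.mk'_mem_incidenceSet_right_iff G).mpr huv)
      have hcard' : (G.deleteEdges (G.incidenceSet v)).edgeSet.ncard ≤ n := by
        have hlt := Set.ncard_lt_ncard
          ⟨hsubE, fun hsup => hnotin (hsup ((SimpleGraph.mem_edgeSet G).mpr huv))⟩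
          (Set.toFinite _)
        omega
      obtain ⟨ih1, ih2⟩ := ih (G.deleteEdges (G.incidenceSet v)) hG' hcard'
      have hvS := v_not_mem_nullSupp (F := F) huv hleaf
      have hindep : ∀ x y, x ∈ nullSupp (G.adjMatrix F) →
          y ∈ nullSupp (G.adjMatrix F) → ¬G.Adj x y := by
        intro x y hx hy hxy
        have hxv : x ≠ v := fun h => hvS (h ▸ hx)
        have hyv : y ≠ v := fun h => hvS (h ▸ hy)
        by_cases hxu : x = u
        · exact hyv (hleaf y (hxu ▸ hxy))
        · by_cases hyu : y = u
          · exact hxv (hleaf x (hyu ▸ hxy.symm))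
          · exact ih1 x y (mem_nullSupp'_of_mem huv hleaf hx hxu)
              (mem_nullSupp'_of_mem huv hleaf hy hyu)
              ((deleteInc_adj G v).mpr ⟨hxy, hxv, hyv⟩)
      refine ⟨hindep, ?_⟩
      have hvanish := BSet_vanish (F := F) huv hleaf
      have hspan_u : Submodule.span F (BSet F (G.deleteEdges (G.incidenceSet v)))
          ≤ LinearMap.ker (LinearMap.proj (R := F) (φ := fun _ : V => F) u) := by
        rw [Submodule.span_le]
        intro x hx
        simp only [SetLike.mem_coe, LinearMap.mem_ker, LinearMap.proj_apply]
        exact (hvanish x hx).1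
      by_cases hu : u ∈ nullSupp (G.adjMatrix F)
      · rw [BSet_eq_caseI huv hleaf hu]
        have hsv_not : sVec G (G.adjMatrix F) v
            ∉ Submodule.span F (BSet F (G.deleteEdges (G.incidenceSet v))) := by
          intro hmem
          have h1 := hspan_u hmem
          simp only [LinearMap.mem_ker, LinearMap.proj_apply] at h1
          rw [sVec_v_at_u huv hu] at h1
          exact one_ne_zero h1
        have hLI1 := LinearIndepOn.id_insert (ih2 : LinearIndepOn F id _) hsv_not
        have hev_not : (Pi.single v 1 : V → F) ∉ Submodule.span F
            (insert (sVec G (G.adjMatrix F) v)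
              (BSet F (G.deleteEdges (G.incidenceSet v)))) := by
          intro hmem
          have hle2 : Submodule.span F (insert (sVec G (G.adjMatrix F) v)
              (BSet F (G.deleteEdges (G.incidenceSet v))))
              ≤ LinearMap.ker (LinearMap.proj (R := F) (φ := fun _ : V => F) v) := by
            rw [Submodule.span_le]
            intro x hx
            simp only [SetLike.mem_coe, LinearMap.mem_ker, LinearMap.proj_apply]
            rcases hx with rfl | hx
            · rw [sVec, if_neg (fun hc => G.irrefl hc.2)]
            · exact (hvanish x hx).2
          have h1 := hle2 hmem
          simp only [LinearMap.mem_ker, LinearMap.proj_apply] at h1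
          rw [Pi.single_apply, if_pos rfl] at h1
          exact one_ne_zero h1
        exact hLI1.id_insert hev_not
      · have hdisj' : ∀ z, G.Adj v z → z ∉ nullSupp (G.adjMatrix F) :=
          hdisj.resolve_left hu
        rw [BSet_eq_caseII huv hleaf hu hdisj']
        have hev_not : (Pi.single v 1 : V → F) ∉ Submodule.span F
            (BSet F (G.deleteEdges (G.incidenceSet v))) := by
          intro hmem
          have hle2 : Submodule.span F (BSet F (G.deleteEdges (G.incidenceSet v)))
              ≤ LinearMap.ker (LinearMap.proj (R := F) (φ := fun _ : V => F) v) := by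
            rw [Submodule.span_le]
            intro x hx
            simp only [SetLike.mem_coe, LinearMap.mem_ker, LinearMap.proj_apply]
            exact (hvanish x hx).2
          have h1 := hle2 hmem
          simp only [LinearMap.mem_ker, LinearMap.proj_apply] at h1
          rw [Pi.single_apply, if_pos rfl] at h1
          exact one_ne_zero h1
        have hLI1 := LinearIndepOn.id_insert (ih2 : LinearIndepOn F id _) hev_not
        have heu_not : (Pi.single u 1 : V → F) ∉ Submodule.span F
            (insert (Pi.single v 1 : V → F)
              (BSet F (G.deleteEdges (G.incidenceSet v)))) := by
          intro hmem
          have hle2 : Submodule.span F (insert (Pi.single v 1 : V → F)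
              (BSet F (G.deleteEdges (G.incidenceSet v))))
              ≤ LinearMap.ker (LinearMap.proj (R := F) (φ := fun _ : V => F) u) := by
            rw [Submodule.span_le]
            intro x hx
            simp only [SetLike.mem_coe, LinearMap.mem_ker, LinearMap.proj_apply]
            rcases hx with rfl | hx
            · rw [Pi.single_apply, if_neg (fun h : u = v => huv.ne h)]
            · exact (hvanish x hx).1
          have h1 := hle2 hmem
          simp only [LinearMap.mem_ker, LinearMap.proj_apply] at h1
          rw [Pi.single_apply, if_pos rfl] at h1
          exact one_ne_zero h1
        exact hLI1.id_insert heu_not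

lemma col_mem_span {G : SimpleGraph V}
    (hindep : ∀ x y, x ∈ nullSupp (G.adjMatrix F) → y ∈ nullSupp (G.adjMatrix F) →
      ¬G.Adj x y) (w : V) :
    (G.adjMatrix F).mulVec (Pi.single w 1 : V → F) ∈ Submodule.span F (BSet F G) := by
  rw [colDecomp]
  apply Submodule.add_mem
  · by_cases hw0 : sVec G (G.adjMatrix F) w = 0
    · rw [hw0]
      exact Submodule.zero_mem _
    · by_cases hwS : w ∈ nullSupp (G.adjMatrix F)
      · exact absurd (sVec_zero_of_no_supp_nbr
          (fun z hz hzS => hindep w z hwS hzS hz)) hw0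
      · exact Submodule.subset_span (mem_BSet.mpr ⟨⟨w, hwS, Or.inr rfl⟩, hw0⟩)
  · apply Submodule.sum_mem
    intro x hx
    rw [Finset.mem_filter] at hx
    exact Submodule.subset_span (mem_BSet.mpr ⟨⟨x, hx.2.2, Or.inl rfl⟩, single_ne_zero' x⟩)

lemma range_le_span {G : SimpleGraph V}
    (hindep : ∀ x y, x ∈ nullSupp (G.adjMatrix F) → y ∈ nullSupp (G.adjMatrix F) →
      ¬G.Adj x y) :
    LinearMap.range (G.adjMatrix F).mulVecLin ≤ Submodule.span F (BSet F G) := by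
  rintro y ⟨c, rfl⟩
  have hcc : c = ∑ w, c w • (Pi.single w 1 : V → F) := by
    funext j
    rw [Finset.sum_apply]
    simp [Pi.single_apply, Finset.sum_ite_eq, mul_ite]
  have hc : (G.adjMatrix F).mulVecLin c
      = ∑ w, c w • (G.adjMatrix F).mulVec (Pi.single w 1 : V → F) := by
    conv_lhs => rw [hcc]
    rw [map_sum]
    refine Finset.sum_congr rfl fun w _ => ?_
    rw [_root_.map_smul, Matrix.mulVecLin_apply]
  rw [hc]
  exact Submodule.sum_mem _ fun w _ => Submodule.smul_mem _ _ (col_mem_span hindep w)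

lemma span_le_range {G : SimpleGraph V} :
    Submodule.span F (BSet F G) ≤ LinearMap.range (G.adjMatrix F).mulVecLin := by
  rw [Submodule.span_le]
  intro x hx
  rw [mem_BSet] at hx
  obtain ⟨⟨w, hw, hxe⟩, h0⟩ := hx
  have hsingle : ∀ z, z ∉ nullSupp (G.adjMatrix F) →
      (Pi.single z 1 : V → F) ∈ LinearMap.range (G.adjMatrix F).mulVecLin := by
    intro z hz
    apply single_mem_range (SimpleGraph.isSymm_adjMatrix G)
    intro x hx0
    by_contra hne
    exact hz ⟨x, hx0, hne⟩
  rcases hxe with rfl | rfl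
  · exact SetLike.mem_coe.mpr (hsingle w hw)
  · have hcol := colDecomp (F := F) G w
    have heq : sVec G (G.adjMatrix F) w
        = (G.adjMatrix F).mulVec (Pi.single w 1 : V → F)
          - ∑ x ∈ Finset.univ.filter
              (fun x => G.Adj w x ∧ x ∉ nullSupp (G.adjMatrix F)),
              (Pi.single x 1 : V → F) := by
      rw [hcol]
      abel
    rw [SetLike.mem_coe, heq]
    apply Submodule.sub_mem
    · exact ⟨Pi.single w 1, Matrix.mulVecLin_apply _ _⟩
    · exact Submodule.sum_mem _ fun x hx =>
        hsingle x (Finset.mem_filter.mp hx).2.2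


end Aux

theorem stmt14 {V : Type} [Fintype V] [DecidableEq V] {F : Type} [Field F]
    (G : SimpleGraph V) (hG : G.IsAcyclic) :
    LinearIndependent F
      (fun b : ↥((⋃ v ∈ {v : V | v ∉ nullSupp (G.adjMatrix F)},
          {Pi.single v (1 : F), sVec G (G.adjMatrix F) v}) \ {0}) => (b : V → F)) ∧
    Submodule.span F
        ((⋃ v ∈ {v : V | v ∉ nullSupp (G.adjMatrix F)},
          {Pi.single v (1 : F), sVec G (G.adjMatrix F) v}) \ {0}) =
      LinearMap.range (G.adjMatrix F).mulVecLin := by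
  obtain ⟨hindep, hLI⟩ := main_aux (F := F) (G.edgeSet.ncard) G hG le_rfl
  exact ⟨hLI, le_antisymm (span_le_range) (range_le_span hindep)⟩
end
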